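/- arXiv:2605.27581 — 7 statements merged into one kernel-verified Lean document; each statement's English description precedes it below -/
import Mathlib

section
/- For real parameters k₁ > 0, γ > 0, ℓ > 0 and ξ ∈ (0,ℓ), define 𝔉_ξ(λ) = cos²(λℓ/k₁) + (γ²/k₁²)·sin²(λξ/k₁)·cos²(λ(ℓ−ξ)/k₁) for λ ∈ ℝ. If ξ = (n/(2m+1))ℓ where n and m are positive integers with n odd and n < 2m+1, then inf_{λ∈ℝ} 𝔉_ξ(λ) > 0. -/
open Real

lemma cos_sq_add_int_mul_pi' (x : ℝ) (k : ℤ) : Real.cos (x + k * π) ^ 2 = Real.cos x ^ 2 := by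
  rw [Real.cos_add_int_mul_pi, mul_pow, ← zpow_natCast ((-1:ℝ)^k), ← zpow_mul]
  norm_num [mul_comm k 2, zpow_mul]

lemma sin_sq_add_int_mul_pi' (x : ℝ) (k : ℤ) : Real.sin (x + k * π) ^ 2 = Real.sin x ^ 2 := by
  rw [Real.sin_add_int_mul_pi, mul_pow, ← zpow_natCast ((-1:ℝ)^k), ← zpow_mul]
  norm_num [mul_comm k 2, zpow_mul]

set_option maxHeartbeats 1000000 in
/-- If `ξ = (n/(2m+1))ℓ` with `n, m` positive integers, `n` odd and
`n < 2m+1`, then the function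
`𝔉_ξ(λ) = cos²(λℓ/k₁) + (γ²/k₁²) sin²(λξ/k₁) cos²(λ(ℓ−ξ)/k₁)`
has a positive infimum over `λ ∈ ℝ`. -/
theorem inf_frakF_pos
    (k₁ γ ℓ ξ : ℝ) (hk₁ : 0 < k₁) (hγ : 0 < γ) (hℓ : 0 < ℓ)
    (hξ : ξ ∈ Set.Ioo 0 ℓ)
    (n m : ℕ) (hn : 0 < n) (hm : 0 < m) (hodd : Odd n) (hlt : n < 2 * m + 1)
    (hrat : ξ = ((n : ℝ) / (2 * (m : ℝ) + 1)) * ℓ) :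
    0 < ⨅ lam : ℝ,
      (Real.cos (lam * ℓ / k₁)) ^ 2
        + (γ ^ 2 / k₁ ^ 2) * (Real.sin (lam * ξ / k₁)) ^ 2
          * (Real.cos (lam * (ℓ - ξ) / k₁)) ^ 2 := by
  have hk₁' : k₁ ≠ 0 := ne_of_gt hk₁
  have hℓ' : ℓ ≠ 0 := ne_of_gt hℓ
  set M : ℝ := 2 * (m : ℝ) + 1 with hMdef
  have hM : M ≠ 0 := by positivity
  set F : ℝ → ℝ := fun lam =>
      (Real.cos (lam * ℓ / k₁)) ^ 2
        + (γ ^ 2 / k₁ ^ 2) * (Real.sin (lam * ξ / k₁)) ^ 2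
          * (Real.cos (lam * (ℓ - ξ) / k₁)) ^ 2 with hF
  have hℓξ : ℓ - ξ = ((M - n) / M) * ℓ := by
    rw [hrat]; field_simp
  -- pointwise positivity
  have hpos : ∀ x, 0 < F x := by
    intro x
    by_cases hc : Real.cos (x * ℓ / k₁) = 0
    · obtain ⟨j, hj⟩ := Real.cos_eq_zero_iff.mp hc
      have hb : x * ξ / k₁ = (2 * (j:ℝ) + 1) * π / 2 * ((n : ℝ) / M) := by
        rw [hrat, ← hj]; ring
      have hd : x * (ℓ - ξ) / k₁ = (2 * (j:ℝ) + 1) * π / 2 * ((M - n) / M) := by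
        rw [hℓξ, ← hj]; ring
      have hs : Real.sin (x * ξ / k₁) ≠ 0 := by
        intro hs0
        obtain ⟨i, hi⟩ := Real.sin_eq_zero_iff.mp hs0
        rw [hb] at hi
        have h2 : (2 * (i:ℝ) * M - (2 * (j:ℝ) + 1) * n) * π = 0 := by
          field_simp at hi; linear_combination π * hi
        have h3 : 2 * (i:ℝ) * M = (2 * (j:ℝ) + 1) * n := by
          have := (mul_eq_zero.mp h2).resolve_right Real.pi_ne_zero
          linarith
        rw [hMdef] at h3
        have h4 : 2 * i * (2 * (m:ℤ) + 1) = (2 * j + 1) * (n:ℤ) := by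
          exact_mod_cast h3
        obtain ⟨s, hs⟩ := hodd
        have hE : Even ((2 * j + 1) * (n:ℤ)) := ⟨i * (2 * (m:ℤ) + 1), by linarith [h4]⟩
        rcases Int.even_mul.mp hE with h | h
        · rcases h with ⟨t, ht⟩; omega
        · rcases h with ⟨t, ht⟩; omega
      have hcd : Real.cos (x * (ℓ - ξ) / k₁) ≠ 0 := by
        intro hc0
        obtain ⟨i, hi⟩ := Real.cos_eq_zero_iff.mp hc0
        rw [hd] at hi
        have h2 : ((2 * (i:ℝ) + 1) * M - (2 * (j:ℝ) + 1) * (M - n)) * π = 0 := by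
          field_simp at hi; linear_combination -π * hi
        have h3 : (2 * (i:ℝ) + 1) * M = (2 * (j:ℝ) + 1) * (M - n) := by
          have := (mul_eq_zero.mp h2).resolve_right Real.pi_ne_zero
          linarith
        rw [hMdef] at h3
        have h4 : (2 * i + 1) * (2 * (m:ℤ) + 1) = (2 * j + 1) * (2 * (m:ℤ) + 1 - n) := by
          exact_mod_cast h3
        obtain ⟨s, hs⟩ := hodd
        have hO : Odd ((2 * i + 1) * (2 * (m:ℤ) + 1)) :=
          ⟨2 * i * m + i + m, by ring⟩
        obtain ⟨t, ht⟩ := hO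
        have hE : Even ((2 * j + 1) * (2 * (m:ℤ) + 1 - n)) :=
          ⟨(2 * j + 1) * ((m:ℤ) - s), by push_cast [hs]; ring⟩
        obtain ⟨u, hu⟩ := hE
        omega
      have : 0 < (γ ^ 2 / k₁ ^ 2) * (Real.sin (x * ξ / k₁)) ^ 2
          * (Real.cos (x * (ℓ - ξ) / k₁)) ^ 2 := by
        have h1 : 0 < (Real.sin (x * ξ / k₁)) ^ 2 := by positivity
        have h2 : 0 < (Real.cos (x * (ℓ - ξ) / k₁)) ^ 2 := by positivity
        positivity
      simp only [hF]
      have := sq_nonneg (Real.cos (x * ℓ / k₁))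
      linarith
    · simp only [hF]
      have h1 : 0 < (Real.cos (x * ℓ / k₁)) ^ 2 := by positivity
      have h2 : 0 ≤ (γ ^ 2 / k₁ ^ 2) * (Real.sin (x * ξ / k₁)) ^ 2
          * (Real.cos (x * (ℓ - ξ) / k₁)) ^ 2 := by positivity
      linarith
  have c1 : Continuous fun x : ℝ => x * ℓ / k₁ := by fun_prop
  have c2 : Continuous fun x : ℝ => x * ξ / k₁ := by fun_prop
  have c3 : Continuous fun x : ℝ => x * (ℓ - ξ) / k₁ := by fun_prop
  have hcont : Continuous F :=
    ((Real.continuous_cos.comp c1).pow 2).add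
      (((continuous_const.mul ((Real.continuous_sin.comp c2).pow 2))).mul
        ((Real.continuous_cos.comp c3).pow 2))
  set T : ℝ := π * M * k₁ / ℓ with hTdef
  have hT : 0 < T := by
    have := Real.pi_pos
    have hMpos : (0:ℝ) < M := by positivity
    positivity
  have hper : Function.Periodic F T := by
    intro x
    have h1 : (x + T) * ℓ / k₁ = x * ℓ / k₁ + ((2 * (m:ℤ) + 1) : ℤ) * π := by
      rw [hTdef]; push_cast; field_simp
      rw [hMdef]
      first
        | ring1
        | (left; ring1)
    have h2 : (x + T) * ξ / k₁ = x * ξ / k₁ + ((n:ℤ) : ℝ) * π := by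
      rw [hrat, hTdef]; push_cast; field_simp
    have h3 : (x + T) * (ℓ - ξ) / k₁ = x * (ℓ - ξ) / k₁ + ((2 * (m:ℤ) + 1 - n : ℤ) : ℝ) * π := by
      rw [hℓξ, hTdef]; push_cast; field_simp
      rw [hMdef]
      first
        | ring1
        | (left; ring1)
    simp only [hF, h1, h2, h3, cos_sq_add_int_mul_pi', sin_sq_add_int_mul_pi']
  obtain ⟨x₀, _, hmin⟩ := (isCompact_Icc (a := (0:ℝ)) (b := T)).exists_isMinOn
    (Set.nonempty_Icc.mpr (le_of_lt hT)) hcont.continuousOn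
  have hlb : ∀ x, F x₀ ≤ F x := by
    intro x
    obtain ⟨y, hy, hxy⟩ := hper.exists_mem_Ico₀ hT x
    rw [hxy]
    exact hmin (Set.Ico_subset_Icc_self hy)
  exact lt_of_lt_of_le (hpos x₀) (le_ciInf hlb)
end

section
/- For real parameters k₁ > 0, γ > 0, ℓ > 0 and ξ ∈ (0,ℓ), define 𝔉_ξ(λ) = cos²(λℓ/k₁) + (γ²/k₁²)·sin²(λξ/k₁)·cos²(λ(ℓ−ξ)/k₁) for λ ∈ ℝ. If 𝔉_ξ(λ) = 0 for some λ ∈ ℝ, then there exist integers a and b such that (2b−1)ξ = 2aℓ; that is, ξ/ℓ can be written as an even integer divided by an odd integer. -/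
open Real

/-- If `𝔉_ξ(λ) = 0` for some real `λ`, then `ξ/ℓ` is an even
integer divided by an odd integer: there are integers `a, b` with
`(2b − 1)ξ = 2aℓ`. -/
theorem frakF_eq_zero_implies_resonant_location
    (k₁ γ ℓ ξ : ℝ) (hk₁ : 0 < k₁) (hγ : 0 < γ) (hℓ : 0 < ℓ)
    (hξ : ξ ∈ Set.Ioo 0 ℓ)
    (lam : ℝ)
    (hzero : (Real.cos (lam * ℓ / k₁)) ^ 2
        + (γ ^ 2 / k₁ ^ 2) * (Real.sin (lam * ξ / k₁)) ^ 2
          * (Real.cos (lam * (ℓ - ξ) / k₁)) ^ 2 = 0) :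
    ∃ a b : ℤ, (2 * (b : ℝ) - 1) * ξ = 2 * (a : ℝ) * ℓ := by
  have hk₁' : k₁ ≠ 0 := hk₁.ne'
  have hA : (0:ℝ) ≤ (Real.cos (lam * ℓ / k₁)) ^ 2 := sq_nonneg _
  have hB : (0:ℝ) ≤ (γ ^ 2 / k₁ ^ 2) * (Real.sin (lam * ξ / k₁)) ^ 2
          * (Real.cos (lam * (ℓ - ξ) / k₁)) ^ 2 := by positivity
  have h1 : Real.cos (lam * ℓ / k₁) = 0 := by
    have : (Real.cos (lam * ℓ / k₁)) ^ 2 = 0 := by linarith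
    exact pow_eq_zero_iff (by norm_num) |>.mp this
  have hB0 : (γ ^ 2 / k₁ ^ 2) * (Real.sin (lam * ξ / k₁)) ^ 2
          * (Real.cos (lam * (ℓ - ξ) / k₁)) ^ 2 = 0 := by
    nlinarith
  have hcoef : (0:ℝ) < γ ^ 2 / k₁ ^ 2 := by positivity
  have h2 : Real.sin (lam * ξ / k₁) = 0 ∨ Real.cos (lam * (ℓ - ξ) / k₁) = 0 := by
    rcases mul_eq_zero.mp hB0 with h | h
    · rcases mul_eq_zero.mp h with h | h
      · exact absurd h hcoef.ne'
      · exact Or.inl (pow_eq_zero_iff (by norm_num) |>.mp h)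
    · exact Or.inr (pow_eq_zero_iff (by norm_num) |>.mp h)
  obtain ⟨b, hb⟩ := Real.cos_eq_zero_iff.mp h1
  have ha : ∃ a : ℤ, (a : ℝ) * π = lam * ξ / k₁ := by
    rcases h2 with h | h
    · exact Real.sin_eq_zero_iff.mp h
    · obtain ⟨c, hc⟩ := Real.cos_eq_zero_iff.mp h
      refine ⟨b - c, ?_⟩
      have : lam * ξ / k₁ = lam * ℓ / k₁ - lam * (ℓ - ξ) / k₁ := by ring
      rw [this, hb, hc]
      push_cast
      ring
  obtain ⟨a, ha⟩ := ha
  have hlam : lam ≠ 0 := by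
    intro h
    rw [h] at h1
    simp at h1
  refine ⟨a, b + 1, ?_⟩
  have hbℝ : lam * ℓ = (2 * (b:ℝ) + 1) * π / 2 * k₁ := by
    field_simp at hb; linarith
  have haℝ : lam * ξ = (a:ℝ) * π * k₁ := by
    field_simp at ha; linarith
  have key : lam * ((2 * ((b:ℝ) + 1) - 1) * ξ - 2 * a * ℓ) = 0 := by
    calc lam * ((2 * ((b:ℝ) + 1) - 1) * ξ - 2 * a * ℓ)
        = (2 * (b:ℝ) + 1) * (lam * ξ) - 2 * a * (lam * ℓ) := by ring
      _ = (2 * (b:ℝ) + 1) * ((a:ℝ) * π * k₁) - 2 * a * ((2 * (b:ℝ) + 1) * π / 2 * k₁) := by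
          rw [haℝ, hbℝ]
      _ = 0 := by ring
  rcases mul_eq_zero.mp key with h | h
  · exact absurd h hlam
  · push_cast
    linarith
end

section
/- Let k₁ > 0, ℓ > 0, ξ ∈ (0,ℓ) and λ ∈ ℝ. Let p, q : [0,ℓ] → ℂ be differentiable functions satisfying p′(x) + i(λ/k₁)p(x) = 0 and q′(x) − i(λ/k₁)q(x) = 0 for all x ∈ [0,ℓ], together with the boundary conditions p(0) + q(0) = 0 and p(ℓ) − q(ℓ) = 0, the interior condition p(ξ) + q(ξ) = 0, and p(0) ≠ 0. Then p(x) = p(0)e^{−iλx/k₁} and q(x) = −p(0)e^{iλx/k₁} for all x ∈ [0,ℓ], and there exist integers m and n such that λ = (m + 1/2)·(k₁π/ℓ) and ξ = (2n/(2m+1))·ℓ. -/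
open Complex

lemma ode_sol (b : ℝ) (c : ℂ) (f : ℝ → ℂ)
    (hf : ∀ x ∈ Set.Icc 0 b, HasDerivAt f (c * f x) x) :
    ∀ x ∈ Set.Icc 0 b, f x = f 0 * Complex.exp (c * x) := by
  set g : ℝ → ℂ := fun x => f x * Complex.exp (-c * x) with hg
  have hg' : ∀ x ∈ Set.Icc 0 b, HasDerivAt g 0 x := by
    intro x hx
    have hlin : HasDerivAt (fun x : ℝ => -c * (x : ℂ)) (-c) x := by
      simpa using ((hasDerivAt_id x).ofReal_comp.const_mul (-c))
    have he : HasDerivAt (fun x : ℝ => Complex.exp (-c * x))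
        (Complex.exp (-c * x) * -c) x := by
      exact (Complex.hasDerivAt_exp (-c * x)).comp x hlin
    have := (hf x hx).mul he
    convert this using 1
    · rfl
    · rfl
    · ring
  have hcont : ContinuousOn g (Set.Icc 0 b) := fun x hx =>
    ((hg' x hx).continuousAt).continuousWithinAt
  have hconst : ∀ x ∈ Set.Icc 0 b, g x = g 0 := by
    intro x hx
    exact constant_of_has_deriv_right_zero hcont
      (fun y hy => ((hg' y (Set.mem_Icc_of_Ico hy)).hasDerivWithinAt)) x hx
  intro x hx
  have h := hconst x hx
  simp only [hg] at h
  have hne : Complex.exp (-c * x) ≠ 0 := Complex.exp_ne_zero _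
  have hx0 : f x = f 0 * Complex.exp (-c * 0) / Complex.exp (-c * x) := by
    rw [eq_div_iff hne]
    exact h
  rw [hx0, div_eq_iff hne, mul_assoc, ← Complex.exp_add]
  norm_num

/-- Riemann invariants of the damped wave equation: solutions of
`p′ + i(λ/k₁)p = 0`, `q′ − i(λ/k₁)q = 0` on `[0,ℓ]` with `p(0)+q(0)=0`,
`p(ℓ)−q(ℓ)=0`, `p(ξ)+q(ξ)=0` and `p(0) ≠ 0` are explicit exponentials, and
`λ = (m+1/2)k₁π/ℓ` while `ξ = (2n/(2m+1))ℓ` for some integers `m, n`. -/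
theorem riemann_invariant_eigenvalue_classification
    (k₁ ℓ ξ lam : ℝ) (hk₁ : 0 < k₁) (hℓ : 0 < ℓ) (hξ : ξ ∈ Set.Ioo 0 ℓ)
    (p q : ℝ → ℂ)
    (hp : ∀ x ∈ Set.Icc 0 ℓ,
      HasDerivAt p (-(Complex.I * ((lam : ℂ) / (k₁ : ℂ))) * p x) x)
    (hq : ∀ x ∈ Set.Icc 0 ℓ,
      HasDerivAt q ((Complex.I * ((lam : ℂ) / (k₁ : ℂ))) * q x) x)
    (hbc0 : p 0 + q 0 = 0)
    (hbcℓ : p ℓ - q ℓ = 0)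
    (hbcξ : p ξ + q ξ = 0)
    (hp0 : p 0 ≠ 0) :
    (∀ x ∈ Set.Icc 0 ℓ,
        p x = p 0 * Complex.exp (-(Complex.I * (lam : ℂ) * (x : ℂ)) / (k₁ : ℂ)) ∧
        q x = -(p 0) * Complex.exp ((Complex.I * (lam : ℂ) * (x : ℂ)) / (k₁ : ℂ))) ∧
    ∃ m n : ℤ,
      lam = ((m : ℝ) + 1 / 2) * (k₁ * Real.pi / ℓ) ∧
      ξ = (2 * (n : ℝ) / (2 * (m : ℝ) + 1)) * ℓ := by
  have hk₁' : (k₁ : ℂ) ≠ 0 := Complex.ofReal_ne_zero.2 hk₁.ne'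
  have hq0 : q 0 = -(p 0) := by linear_combination hbc0
  have hpform : ∀ x ∈ Set.Icc 0 ℓ,
      p x = p 0 * Complex.exp (-(Complex.I * (lam : ℂ) * (x : ℂ)) / (k₁ : ℂ)) := by
    intro x hx
    rw [ode_sol ℓ _ p hp x hx]
    congr 1
    field_simp
  have hqform : ∀ x ∈ Set.Icc 0 ℓ,
      q x = -(p 0) * Complex.exp ((Complex.I * (lam : ℂ) * (x : ℂ)) / (k₁ : ℂ)) := by
    intro x hx
    rw [ode_sol ℓ _ q hq x hx, hq0]
    congr 1
    field_simp
  refine ⟨fun x hx => ⟨hpform x hx, hqform x hx⟩, ?_⟩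
  have e1 : ∀ t : ℝ, (Complex.I * (lam : ℂ) * (t : ℂ)) / (k₁ : ℂ)
      = ((lam * t / k₁ : ℝ) : ℂ) * Complex.I := by
    intro t; push_cast; field_simp
  have e2 : ∀ t : ℝ, -(Complex.I * (lam : ℂ) * (t : ℂ)) / (k₁ : ℂ)
      = -(((lam * t / k₁ : ℝ) : ℂ)) * Complex.I := by
    intro t; rw [neg_div, e1 t]; ring
  have hℓmem : (ℓ : ℝ) ∈ Set.Icc 0 ℓ := ⟨hℓ.le, le_rfl⟩
  have hξmem : ξ ∈ Set.Icc 0 ℓ := ⟨hξ.1.le, hξ.2.le⟩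
  -- cosine condition at ℓ
  have hcos : Real.cos (lam * ℓ / k₁) = 0 := by
    have h := hbcℓ
    rw [hpform ℓ hℓmem, hqform ℓ hℓmem] at h
    have h3 : p 0 * (Complex.exp (-(Complex.I * (lam : ℂ) * (ℓ : ℂ)) / (k₁ : ℂ))
        + Complex.exp ((Complex.I * (lam : ℂ) * (ℓ : ℂ)) / (k₁ : ℂ))) = p 0 * 0 := by
      rw [mul_zero]; linear_combination h
    have h2 := mul_left_cancel₀ hp0 h3
    rw [e1 ℓ, e2 ℓ] at h2
    have hco : Complex.cos (((lam * ℓ / k₁ : ℝ) : ℂ)) = 0 := by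
      unfold Complex.cos
      linear_combination h2 / 2
    have : ((Real.cos (lam * ℓ / k₁) : ℝ) : ℂ) = 0 := by
      rw [Complex.ofReal_cos]; exact hco
    exact_mod_cast this
  -- sine condition at ξ
  have hsin : Real.sin (lam * ξ / k₁) = 0 := by
    have h := hbcξ
    rw [hpform ξ hξmem, hqform ξ hξmem] at h
    have h3 : p 0 * (Complex.exp (-(Complex.I * (lam : ℂ) * (ξ : ℂ)) / (k₁ : ℂ))
        - Complex.exp ((Complex.I * (lam : ℂ) * (ξ : ℂ)) / (k₁ : ℂ))) = p 0 * 0 := by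
      rw [mul_zero]; linear_combination h
    have h2 := mul_left_cancel₀ hp0 h3
    rw [e1 ξ, e2 ξ] at h2
    have hsi : Complex.sin (((lam * ξ / k₁ : ℝ) : ℂ)) = 0 := by
      unfold Complex.sin
      linear_combination (Complex.I / 2) * h2
    have : ((Real.sin (lam * ξ / k₁) : ℝ) : ℂ) = 0 := by
      rw [Complex.ofReal_sin]; exact hsi
    exact_mod_cast this
  obtain ⟨m, hm⟩ := Real.cos_eq_zero_iff.1 hcos
  obtain ⟨n, hn⟩ := Real.sin_eq_zero_iff.1 hsin
  have hπ : Real.pi ≠ 0 := Real.pi_ne_zero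
  have hk : k₁ ≠ 0 := hk₁.ne'
  have hl : ℓ ≠ 0 := hℓ.ne'
  have hmne : (2 * (m : ℝ) + 1) ≠ 0 := by
    intro h
    have h1 : ((2 * m + 1 : ℤ) : ℝ) = 0 := by push_cast; linarith
    have h2 : (2 * m + 1 : ℤ) = 0 := by exact_mod_cast h1
    omega
  have hlam : lam = ((m : ℝ) + 1 / 2) * (k₁ * Real.pi / ℓ) := by
    field_simp at hm ⊢
    linear_combination hm
  refine ⟨m, n, hlam, ?_⟩
  have hξeq : (n : ℝ) * Real.pi * k₁ = lam * ξ := by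
    field_simp at hn
    linear_combination hn
  rw [hlam] at hξeq
  rw [div_mul_eq_mul_div, eq_div_iff hmne]
  field_simp at hξeq
  have hcancel : (ξ * (2 * (m : ℝ) + 1)) * (Real.pi * k₁)
      = (2 * (n : ℝ) * ℓ) * (Real.pi * k₁) := by
    linear_combination (-(Real.pi * k₁)) * hξeq
  have hne2 : (Real.pi * k₁) ≠ 0 := by positivity
  exact mul_right_cancel₀ hne2 hcancel
end

section
/- Let k₁ > 0, γ > 0, ℓ > 0 and ξ ∈ (0,ℓ). Let p₁, q₁ : [0,ξ] → ℝ and p₂, q₂ : [ξ,ℓ] → ℝ be continuously differentiable functions satisfying: q₁(0) + p₁(0) = 0; q₂(ℓ) − p₂(ℓ) = 0; the transmission conditions q₂(ξ) + p₂(ξ) = q₁(ξ) + p₁(ξ) and (q₂(ξ) − q₁(ξ)) + (p₁(ξ) − p₂(ξ)) = −(γ/k₁)(p₂(ξ) + q₂(ξ)). Then ∫₀^ξ (k₁ p₁′(x)p₁(x) − k₁ q₁′(x)q₁(x)) dx + ∫_ξ^ℓ (k₁ p₂′(x)p₂(x) − k₁ q₂′(x)q₂(x)) dx = −(γ/2)·(p₂(ξ)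 + q₂(ξ))². -/
lemma ftc_sq (k a b : ℝ) (hab : a ≤ b) (f df : ℝ → ℝ)
    (hf : ∀ x ∈ Set.Icc a b, HasDerivAt f (df x) x)
    (hc : ContinuousOn df (Set.Icc a b)) :
    (∫ x in a..b, k * df x * f x) = k / 2 * (f b ^ 2 - f a ^ 2) := by
  have huIcc : Set.uIcc a b = Set.Icc a b := Set.uIcc_of_le hab
  have hfc : ContinuousOn f (Set.Icc a b) := fun x hx => (hf x hx).continuousAt.continuousWithinAt
  have key : (∫ x in a..b, k * df x * f x) = k / 2 * f b ^ 2 - k / 2 * f a ^ 2 := by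
    apply intervalIntegral.integral_eq_sub_of_hasDerivAt
    · intro x hx
      rw [huIcc] at hx
      have := ((hf x hx).pow 2).const_mul (k / 2)
      convert this using 1
      · rfl
      · rfl
      ring
    · rw [intervalIntegrable_iff_integrableOn_Icc_of_le hab]
      exact (ContinuousOn.mul (continuousOn_const.mul hc) hfc).integrableOn_compact isCompact_Icc
  rw [key]; ring

/-- Dissipativity identity for the first-order operator
`𝐀(p,q) = (k₁ p_x, −k₁ q_x)` with pointwise damping at `ξ`: for C¹ Riemann
invariants satisfying the boundary and transmission conditions,
`((p,q), 𝐀(p,q))_{L²} = −(γ/2)(p₂(ξ)+q₂(ξ))²`. -/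
theorem dissipativity_identity
    (k₁ γ ℓ ξ : ℝ) (hk₁ : 0 < k₁) (hγ : 0 < γ) (hℓ : 0 < ℓ)
    (hξ : ξ ∈ Set.Ioo 0 ℓ)
    (p₁ q₁ p₂ q₂ dp₁ dq₁ dp₂ dq₂ : ℝ → ℝ)
    (hp₁ : ∀ x ∈ Set.Icc 0 ξ, HasDerivAt p₁ (dp₁ x) x)
    (hq₁ : ∀ x ∈ Set.Icc 0 ξ, HasDerivAt q₁ (dq₁ x) x)
    (hp₂ : ∀ x ∈ Set.Icc ξ ℓ, HasDerivAt p₂ (dp₂ x) x)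
    (hq₂ : ∀ x ∈ Set.Icc ξ ℓ, HasDerivAt q₂ (dq₂ x) x)
    (hcp₁ : ContinuousOn dp₁ (Set.Icc 0 ξ))
    (hcq₁ : ContinuousOn dq₁ (Set.Icc 0 ξ))
    (hcp₂ : ContinuousOn dp₂ (Set.Icc ξ ℓ))
    (hcq₂ : ContinuousOn dq₂ (Set.Icc ξ ℓ))
    (hbc0 : q₁ 0 + p₁ 0 = 0)
    (hbcℓ : q₂ ℓ - p₂ ℓ = 0)
    (htrans1 : q₂ ξ + p₂ ξ = q₁ ξ + p₁ ξ)
    (htrans2 : (q₂ ξ - q₁ ξ) + (p₁ ξ - p₂ ξ) = -(γ / k₁) * (p₂ ξ + q₂ ξ)) :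
    (∫ x in (0 : ℝ)..ξ, (k₁ * dp₁ x * p₁ x - k₁ * dq₁ x * q₁ x))
      + (∫ x in ξ..ℓ, (k₁ * dp₂ x * p₂ x - k₁ * dq₂ x * q₂ x))
      = -(γ / 2) * (p₂ ξ + q₂ ξ) ^ 2 := by
  obtain ⟨h0ξ, hξℓ⟩ := hξ
  have h1 : (0:ℝ) ≤ ξ := h0ξ.le
  have h2 : ξ ≤ ℓ := hξℓ.le
  have intsub : ∀ (a b : ℝ) (hab : a ≤ b) (f df g dg : ℝ → ℝ),
      (∀ x ∈ Set.Icc a b, HasDerivAt f (df x) x) →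
      (∀ x ∈ Set.Icc a b, HasDerivAt g (dg x) x) →
      ContinuousOn df (Set.Icc a b) → ContinuousOn dg (Set.Icc a b) →
      (∫ x in a..b, (k₁ * df x * f x - k₁ * dg x * g x))
        = k₁ / 2 * (f b ^ 2 - f a ^ 2) - k₁ / 2 * (g b ^ 2 - g a ^ 2) := by
    intro a b hab f df g dg hf hg hcf hcg
    have hfc : ContinuousOn f (Set.Icc a b) := fun x hx => (hf x hx).continuousAt.continuousWithinAt
    have hgc : ContinuousOn g (Set.Icc a b) := fun x hx => (hg x hx).continuousAt.continuousWithinAt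
    have i1 : IntervalIntegrable (fun x => k₁ * df x * f x) MeasureTheory.volume a b := by
      rw [intervalIntegrable_iff_integrableOn_Icc_of_le hab]
      exact (ContinuousOn.mul (continuousOn_const.mul hcf) hfc).integrableOn_compact isCompact_Icc
    have i2 : IntervalIntegrable (fun x => k₁ * dg x * g x) MeasureTheory.volume a b := by
      rw [intervalIntegrable_iff_integrableOn_Icc_of_le hab]
      exact (ContinuousOn.mul (continuousOn_const.mul hcg) hgc).integrableOn_compact isCompact_Icc
    rw [intervalIntegral.integral_sub i1 i2, ftc_sq k₁ a b hab f df hf hcf,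
      ftc_sq k₁ a b hab g dg hg hcg]
  rw [intsub 0 ξ h1 p₁ dp₁ q₁ dq₁ hp₁ hq₁ hcp₁ hcq₁,
     intsub ξ ℓ h2 p₂ dp₂ q₂ dq₂ hp₂ hq₂ hcp₂ hcq₂]
  have hk : k₁ ≠ 0 := hk₁.ne'
  have h2' : k₁ * ((q₂ ξ - q₁ ξ) + (p₁ ξ - p₂ ξ)) = -γ * (p₂ ξ + q₂ ξ) := by
    rw [htrans2]; field_simp
  linear_combination (k₁/2*(q₁ 0 - p₁ 0)) * hbc0 - (k₁/2*(q₂ ℓ + p₂ ℓ)) * hbcℓ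
    - (k₁/2*(p₁ ξ - q₁ ξ)) * htrans1 + (1/2*(p₂ ξ + q₂ ξ)) * h2'
end

section
/- Let α > 0, α₀ > 0, ℓ > 0 and λ ∈ ℝ with λ ≠ 0. Let u : [0,ℓ] → ℝ be a four times continuously differentiable function, not identically zero, satisfying α u′′′′(x) − α₀ u′′(x) = λ² u(x) for all x ∈ [0,ℓ], together with the boundary conditions u(0) = 0, u′′(0) = 0, u′(ℓ) = 0, u′′′(ℓ) = 0. Then there exist a natural number k and a real constant A ≠ 0 such that u(x) = A·sin((2k+1)πx/(2ℓ)) for all x ∈ [0,ℓ], and λ² = α·((2k+1)π/(2ℓ))⁴ + α₀·((2k+1)π/(2ℓ))². -/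
open Set

private lemma beam_lip (c : ℝ) :
    LipschitzWith (⟨max 1 |c|, le_trans zero_le_one (le_max_left _ _)⟩ : NNReal)
      (fun p : ℝ × ℝ => (p.2, c * p.1)) := by
  apply LipschitzWith.of_dist_le_mul
  intro p q
  rw [Prod.dist_eq, Prod.dist_eq]
  simp only [Real.dist_eq, NNReal.coe_mk]
  rw [← mul_sub, abs_mul]
  have h1 : (1:ℝ) ≤ max 1 |c| := le_max_left _ _
  have h2 : |c| ≤ max 1 |c| := le_max_right _ _
  have h3 : |p.1 - q.1| ≤ max |p.1 - q.1| |p.2 - q.2| := le_max_left _ _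
  have h4 : |p.2 - q.2| ≤ max |p.1 - q.1| |p.2 - q.2| := le_max_right _ _
  have h5 : (0:ℝ) ≤ |p.1 - q.1| := abs_nonneg _
  have h6 : (0:ℝ) ≤ |p.2 - q.2| := abs_nonneg _
  have h7 : (0:ℝ) ≤ |c| := abs_nonneg _
  change max |p.2 - q.2| (|c| * |p.1 - q.1|) ≤ max 1 |c| * max |p.1 - q.1| |p.2 - q.2|
  apply max_le
  · nlinarith
  · nlinarith

private lemma beam_pair_ode_unique (c a b : ℝ) (f f₁ g g₁ : ℝ → ℝ)
    (hf : ∀ x ∈ Icc a b, HasDerivAt f (f₁ x) x)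
    (hf₁ : ∀ x ∈ Icc a b, HasDerivAt f₁ (c * f x) x)
    (hg : ∀ x ∈ Icc a b, HasDerivAt g (g₁ x) x)
    (hg₁ : ∀ x ∈ Icc a b, HasDerivAt g₁ (c * g x) x)
    (h0 : f a = g a) (h0' : f₁ a = g₁ a) :
    ∀ x ∈ Icc a b, f x = g x ∧ f₁ x = g₁ x := by
  have key : EqOn (fun x => (f x, f₁ x)) (fun x => (g x, g₁ x)) (Icc a b) := by
    apply ODE_solution_unique (v := fun _ p => (p.2, c * p.1)) (fun _ => beam_lip c)
    · exact ContinuousOn.prodMk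
        (fun x hx => (hf x hx).continuousAt.continuousWithinAt)
        (fun x hx => (hf₁ x hx).continuousAt.continuousWithinAt)
    · intro t ht
      exact (((hf t (Ico_subset_Icc_self ht)).prodMk
        (hf₁ t (Ico_subset_Icc_self ht)))).hasDerivWithinAt
    · exact ContinuousOn.prodMk
        (fun x hx => (hg x hx).continuousAt.continuousWithinAt)
        (fun x hx => (hg₁ x hx).continuousAt.continuousWithinAt)
    · intro t ht
      exact (((hg t (Ico_subset_Icc_self ht)).prodMk
        (hg₁ t (Ico_subset_Icc_self ht)))).hasDerivWithinAt
    · simp [h0, h0']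
  intro x hx
  have := key hx
  exact ⟨congrArg Prod.fst this, congrArg Prod.snd this⟩
/-- Classification of eigenfunctions of the Euler–Bernoulli beam
operator `u ↦ α u′′′′ − α₀ u′′` with `u(0) = u″(0) = 0`, `u′(ℓ) = u‴(ℓ) = 0`:
every nonzero eigenfunction is a multiple of `sin((2k+1)πx/(2ℓ))` and
`λ² = α((2k+1)π/(2ℓ))⁴ + α₀((2k+1)π/(2ℓ))²`. -/
theorem beam_eigenfunction_classification
    (α α₀ ℓ lam : ℝ) (hα : 0 < α) (hα₀ : 0 < α₀) (hℓ : 0 < ℓ) (hlam : lam ≠ 0)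
    (u u₁ u₂ u₃ u₄ : ℝ → ℝ)
    (hu₁ : ∀ x ∈ Set.Icc 0 ℓ, HasDerivAt u (u₁ x) x)
    (hu₂ : ∀ x ∈ Set.Icc 0 ℓ, HasDerivAt u₁ (u₂ x) x)
    (hu₃ : ∀ x ∈ Set.Icc 0 ℓ, HasDerivAt u₂ (u₃ x) x)
    (hu₄ : ∀ x ∈ Set.Icc 0 ℓ, HasDerivAt u₃ (u₄ x) x)
    (hcont : ContinuousOn u₄ (Set.Icc 0 ℓ))
    (hne : ∃ x ∈ Set.Icc 0 ℓ, u x ≠ 0)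
    (hode : ∀ x ∈ Set.Icc 0 ℓ, α * u₄ x - α₀ * u₂ x = lam ^ 2 * u x)
    (hbc1 : u 0 = 0) (hbc2 : u₂ 0 = 0) (hbc3 : u₁ ℓ = 0) (hbc4 : u₃ ℓ = 0) :
    ∃ (k : ℕ) (A : ℝ), A ≠ 0 ∧
      (∀ x ∈ Set.Icc 0 ℓ,
        u x = A * Real.sin ((2 * (k : ℝ) + 1) * Real.pi * x / (2 * ℓ))) ∧
      lam ^ 2 = α * ((2 * (k : ℝ) + 1) * Real.pi / (2 * ℓ)) ^ 4
        + α₀ * ((2 * (k : ℝ) + 1) * Real.pi / (2 * ℓ)) ^ 2 := by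
  have hlam2 : 0 < lam ^ 2 := by positivity
  obtain ⟨N, M, hN, hM, hM_eq, hNM⟩ :
      ∃ N M : ℝ, 0 < N ∧ 0 < M ∧ α * M = α * N + α₀ ∧ α * (N * M) = lam ^ 2 := by
    set D : ℝ := Real.sqrt (α₀ ^ 2 + 4 * α * lam ^ 2) with hD_def
    have hD2 : D ^ 2 = α₀ ^ 2 + 4 * α * lam ^ 2 := Real.sq_sqrt (by positivity)
    have hDnn : 0 ≤ D := Real.sqrt_nonneg _
    have hDgt : α₀ < D := by nlinarith
    refine ⟨(D - α₀) / (2 * α), (D + α₀) / (2 * α),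
      div_pos (by linarith) (by linarith), div_pos (by linarith) (by linarith), ?_, ?_⟩
    · field_simp
      ring
    · field_simp
      nlinarith [hD2]
  -- the function w = u'' + N u satisfies w'' = M w
  set w : ℝ → ℝ := fun x => u₂ x + N * u x with hw_def
  set w₁ : ℝ → ℝ := fun x => u₃ x + N * u₁ x with hw₁_def
  have hwval : ∀ x, w x = u₂ x + N * u x := fun x => rfl
  have hw₁val : ∀ x, w₁ x = u₃ x + N * u₁ x := fun x => rfl
  have hw : ∀ x ∈ Set.Icc 0 ℓ, HasDerivAt w (w₁ x) x := fun x hx =>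
    (hu₃ x hx).add ((hu₁ x hx).const_mul N)
  have hw₁ : ∀ x ∈ Set.Icc 0 ℓ, HasDerivAt w₁ (M * w x) x := by
    intro x hx
    have h := (hu₄ x hx).add ((hu₂ x hx).const_mul N)
    have heq : u₄ x + N * u₂ x = M * w x := by
      rw [hwval]
      have h2 : α * (u₄ x + N * u₂ x) = α * (M * (u₂ x + N * u x)) := by
        linear_combination hode x hx - u₂ x * hM_eq - u x * hNM
      exact mul_left_cancel₀ (ne_of_gt hα) h2
    rwa [heq] at h
  clear hw_def hw₁_def
  clear_value w w₁
  -- energy argument: w₁² - M w² is constant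
  have hE : ∀ x ∈ Set.Icc 0 ℓ, HasDerivAt (fun x => (w₁ x) ^ 2 - M * (w x) ^ 2) 0 x := by
    intro x hx
    have h := ((hw₁ x hx).pow 2).sub (((hw x hx).pow 2).const_mul M)
    refine h.congr_deriv ?_
    push_cast
    ring
  have hEconst : ∀ x ∈ Set.Icc 0 ℓ,
      (w₁ x) ^ 2 - M * (w x) ^ 2 = (w₁ 0) ^ 2 - M * (w 0) ^ 2 := by
    apply constant_of_has_deriv_right_zero
    · exact fun x hx => (hE x hx).continuousAt.continuousWithinAt
    · exact fun x hx => (hE x (Set.Ico_subset_Icc_self hx)).hasDerivWithinAt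
  have hw0 : w 0 = 0 := by rw [hwval, hbc1, hbc2]; ring
  have hw₁ℓ : w₁ ℓ = 0 := by rw [hw₁val, hbc3, hbc4]; ring
  have hEℓ := hEconst ℓ ⟨hℓ.le, le_refl ℓ⟩
  rw [hw0, hw₁ℓ] at hEℓ
  have hw₁0 : w₁ 0 = 0 := by
    have h1 : (w₁ 0) ^ 2 = 0 := by nlinarith [sq_nonneg (w ℓ), sq_nonneg (w₁ 0)]
    exact pow_eq_zero_iff (by norm_num : (2:ℕ) ≠ 0) |>.mp h1
  -- w ≡ 0 on [0, ℓ]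
  have hwzero : ∀ x ∈ Set.Icc 0 ℓ, w x = 0 := by
    intro x hx
    have := beam_pair_ode_unique M 0 ℓ w w₁ (fun _ => 0) (fun _ => 0)
      hw hw₁
      (fun x _ => by simpa using hasDerivAt_const x (0:ℝ))
      (fun x _ => by simpa using hasDerivAt_const x (0:ℝ))
      hw0 hw₁0 x hx
    exact this.1
  -- u satisfies u'' = -N u
  obtain ⟨n, hn, hn2⟩ : ∃ n : ℝ, 0 < n ∧ n ^ 2 = N :=
    ⟨Real.sqrt N, Real.sqrt_pos.2 hN, Real.sq_sqrt hN.le⟩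
  set A : ℝ := u₁ 0 / n with hA_def
  have hAn : A * n = u₁ 0 := by rw [hA_def]; field_simp
  clear hA_def
  clear_value A
  have hgd : ∀ x : ℝ, HasDerivAt (fun x => A * Real.sin (n * x)) (A * n * Real.cos (n * x)) x := by
    intro x
    have hinner : HasDerivAt (fun x : ℝ => n * x) n x := by
      simpa using (hasDerivAt_id x).const_mul n
    have h := ((Real.hasDerivAt_sin (n * x)).comp x hinner).const_mul A
    refine h.congr_deriv ?_
    ring
  have hgd₁ : ∀ x : ℝ, HasDerivAt (fun x => A * n * Real.cos (n * x))
      (-N * (A * Real.sin (n * x))) x := by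
    intro x
    have hinner : HasDerivAt (fun x : ℝ => n * x) n x := by
      simpa using (hasDerivAt_id x).const_mul n
    have h := ((Real.hasDerivAt_cos (n * x)).comp x hinner).const_mul (A * n)
    refine h.congr_deriv ?_
    rw [← hn2]
    ring
  have hu_eq : ∀ x ∈ Set.Icc 0 ℓ,
      u x = A * Real.sin (n * x) ∧ u₁ x = A * n * Real.cos (n * x) := by
    apply beam_pair_ode_unique (-N) 0 ℓ u u₁
      (fun x => A * Real.sin (n * x)) (fun x => A * n * Real.cos (n * x))
      hu₁
    · intro x hx
      have h := hu₂ x hx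
      have heq : u₂ x = -N * u x := by
        have h0 := hwzero x hx
        rw [hwval] at h0
        linarith
      rwa [heq] at h
    · exact fun x _ => hgd x
    · exact fun x _ => hgd₁ x
    · rw [hbc1]; simp
    · rw [mul_zero, Real.cos_zero, mul_one, hAn]
  have hA : A ≠ 0 := by
    intro h
    obtain ⟨x, hx, hux⟩ := hne
    exact hux (by rw [(hu_eq x hx).1, h, zero_mul])
  -- boundary condition at ℓ gives cos(nℓ) = 0
  have hcos : Real.cos (n * ℓ) = 0 := by
    have h := (hu_eq ℓ ⟨hℓ.le, le_refl ℓ⟩).2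
    rw [hbc3] at h
    rcases mul_eq_zero.mp h.symm with h' | h'
    · exact absurd h' (mul_ne_zero hA hn.ne')
    · exact h'
  obtain ⟨j, hj⟩ := Real.cos_eq_zero_iff.mp hcos
  have hjpos : 0 ≤ j := by
    by_contra hneg
    push_neg at hneg
    have hj1 : (j : ℝ) ≤ -1 := by exact_mod_cast Int.le_sub_one_of_lt hneg
    have hnl : 0 < n * ℓ := mul_pos hn hℓ
    nlinarith [Real.pi_pos]
  have hkj : ((j.toNat : ℕ) : ℝ) = (j : ℝ) := by exact_mod_cast Int.toNat_of_nonneg hjpos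
  have hn_eq : n = (2 * ((j.toNat : ℕ) : ℝ) + 1) * Real.pi / (2 * ℓ) := by
    rw [hkj]
    field_simp
    linarith [hj]
  refine ⟨j.toNat, A, hA, ?_, ?_⟩
  · intro x hx
    rw [(hu_eq x hx).1]
    congr 1
    rw [hn_eq]
    ring
  · rw [← hn_eq]
    calc lam ^ 2 = α * (N * M) := hNM.symm
      _ = N * (α * M) := by ring
      _ = N * (α * N + α₀) := by rw [hM_eq]
      _ = α * n ^ 4 + α₀ * n ^ 2 := by rw [← hn2]; ring
end

section
/- Let H be a Banach space and let (T(t))_{t≥0} be a family of bounded linear operators on H such that T(0) = I, the map t ↦ T(t)x is continuous from [0,∞) to H for every x ∈ H, and sup_{t≥0} ‖T(t)‖ ≤ c₀ for some constant c₀ > 0. Let F : H → H be globally Lipschitz continuous with Lipschitz constant K₀. Then for every U₀ ∈ H there exists a unique continuous function U : [0,∞) → H satisfying the integral equation U(t) = T(t)U₀ + ∫₀ᵗ T(t−s) F(U(s)) ds for all t ≥ 0, where the integral is a Bochner integral. -/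
open Set Filter MeasureTheory Real Topology

/-- Joint continuity of a strongly continuous, uniformly bounded family of operators. -/
theorem MildAux.joint_cont {H : Type*} [NormedAddCommGroup H] [NormedSpace ℝ H]
    (S : ℝ → H →L[ℝ] H) (c₀ : ℝ)
    (hcont : ∀ x, Continuous fun t => S t x) (hbdd : ∀ t, ‖S t‖ ≤ c₀) :
    Continuous fun p : ℝ × H => S p.1 p.2 := by
  rw [continuous_iff_continuousAt]
  rintro ⟨t₀, x₀⟩
  have h1 : Tendsto (fun p : ℝ × H => S p.1 (p.2 - x₀)) (𝓝 (t₀, x₀)) (𝓝 0) := by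
    have hb : ∀ p : ℝ × H, ‖S p.1 (p.2 - x₀)‖ ≤ c₀ * ‖p.2 - x₀‖ := fun p =>
      ((S p.1).le_opNorm _).trans (mul_le_mul_of_nonneg_right (hbdd _) (norm_nonneg _))
    have h2 : Tendsto (fun p : ℝ × H => c₀ * ‖p.2 - x₀‖) (𝓝 (t₀, x₀)) (𝓝 (c₀ * ‖x₀ - x₀‖)) :=
      (Continuous.tendsto (by continuity) _)
    simp only [sub_self, norm_zero, mul_zero] at h2
    exact squeeze_zero_norm hb h2
  have h2 : Tendsto (fun p : ℝ × H => S p.1 x₀) (𝓝 (t₀, x₀)) (𝓝 (S t₀ x₀)) :=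
    ((hcont x₀).tendsto t₀).comp (continuous_fst.tendsto _)
  have h3 := h1.add h2
  rw [zero_add] at h3
  exact h3.congr fun p => by rw [← map_add, sub_add_cancel]

/-- Global existence and uniqueness of mild solutions: if
`T t` is a uniformly bounded strongly continuous family with `T 0 = I` and
`F` is globally Lipschitz, then for every `U₀` there is a unique continuous
`U : [0,∞) → H` with `U(t) = T(t)U₀ + ∫₀ᵗ T(t−s)F(U(s)) ds`. -/
theorem mild_solution_exists_unique
    {H : Type*} [NormedAddCommGroup H] [NormedSpace ℝ H] [CompleteSpace H]
    (T : ℝ → H →L[ℝ] H)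
    (hT0 : T 0 = ContinuousLinearMap.id ℝ H)
    (hTcont : ∀ x : H, ContinuousOn (fun t => T t x) (Set.Ici 0))
    (c₀ : ℝ) (hc₀ : 0 < c₀) (hTbdd : ∀ t, 0 ≤ t → ‖T t‖ ≤ c₀)
    (F : H → H) (K₀ : NNReal) (hF : LipschitzWith K₀ F)
    (U₀ : H) :
    ∃ U : ℝ → H,
      (ContinuousOn U (Set.Ici 0) ∧
        ∀ t, 0 ≤ t →
          U t = T t U₀ + ∫ s in (0 : ℝ)..t, T (t - s) (F (U s))) ∧
      ∀ V : ℝ → H,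
        (ContinuousOn V (Set.Ici 0) ∧
          ∀ t, 0 ≤ t →
            V t = T t U₀ + ∫ s in (0 : ℝ)..t, T (t - s) (F (V s))) →
        ∀ t, 0 ≤ t → V t = U t := by
  classical
  -- extend `T` to all of `ℝ`
  set S : ℝ → H →L[ℝ] H := fun t => T (max t 0) with hSdef
  have hS_eq : ∀ t : ℝ, 0 ≤ t → S t = T t := fun t ht => by
    simp only [hSdef, max_eq_left ht]
  have hSbdd : ∀ t, ‖S t‖ ≤ c₀ := fun t => hTbdd _ (le_max_right _ _)
  have hmaxcont : Continuous fun t : ℝ => max t 0 := continuous_id.max continuous_const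
  have hScont : ∀ x, Continuous fun t => S t x := fun x =>
    (hTcont x).comp_continuous hmaxcont fun t => mem_Ici.2 (le_max_right _ _)
  have hSj : Continuous fun p : ℝ × H => S p.1 p.2 :=
    MildAux.joint_cont S c₀ hScont hSbdd
  -- constants
  set K : ℝ := c₀ * K₀ with hKdef
  have hK0 : 0 ≤ K := mul_nonneg hc₀.le K₀.coe_nonneg
  set lam : ℝ := K + 1 with hlamdef
  have hlam : 0 < lam := by positivity
  have hexpint : ∀ t : ℝ, 0 ≤ t →
      (∫ s in (0:ℝ)..t, Real.exp (lam * s)) ≤ lam⁻¹ * Real.exp (lam * t) := by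
    intro t ht
    rw [intervalIntegral.integral_comp_mul_left Real.exp (ne_of_gt hlam), mul_zero,
      integral_exp, Real.exp_zero, smul_eq_mul]
    have h1 : Real.exp (lam * t) - 1 ≤ Real.exp (lam * t) := by linarith
    exact mul_le_mul_of_nonneg_left h1 (inv_nonneg.2 hlam.le)
  -- the Picard map (raw, unweighted)
  set P : (ℝ → H) → ℝ → H :=
    fun v t => S t U₀ + ∫ s in (0:ℝ)..(max t 0), S (max t 0 - s) (F (v s)) with hPdef
  have hPcont : ∀ v : ℝ → H, Continuous v → Continuous (P v) := by
    intro v hv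
    have hG : Continuous fun p : ℝ × ℝ => S (p.1 - p.2) (F (v p.2)) :=
      hSj.comp ((continuous_fst.sub continuous_snd).prodMk
        (hF.continuous.comp (hv.comp continuous_snd)))
    have h2 : Continuous fun r : ℝ => ∫ s in (0:ℝ)..r, S (r - s) (F (v s)) :=
      intervalIntegral.continuous_parametric_intervalIntegral_of_continuous
        (f := fun r s => S (r - s) (F (v s))) (μ := volume) hG continuous_id
    exact (hScont U₀).add (h2.comp hmaxcont)
  have hIntg : ∀ (v : ℝ → H), Continuous v → ∀ (r a b : ℝ),
      IntervalIntegrable (fun s => S (r - s) (F (v s))) volume a b := by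
    intro v hv r a b
    exact (hSj.comp ((continuous_const.sub continuous_id).prodMk
      (hF.continuous.comp hv))).intervalIntegrable a b
  -- the key integral estimate
  have hkey : ∀ r : ℝ, 0 ≤ r → ∀ φ : ℝ → H, Continuous φ → ∀ A : ℝ,
      (∀ s ∈ Icc (0:ℝ) r, ‖φ s‖ ≤ A * Real.exp (lam * s)) →
      ‖∫ s in (0:ℝ)..r, S (r - s) (φ s)‖ ≤ c₀ * A * (lam⁻¹ * Real.exp (lam * r)) := by
    intro r hr φ hφ A hA
    have hA0 : 0 ≤ A := by
      have h1 := (norm_nonneg (φ 0)).trans (hA 0 ⟨le_refl 0, hr⟩)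
      simpa using h1
    have hcont1 : Continuous fun s => S (r - s) (φ s) :=
      hSj.comp ((continuous_const.sub continuous_id).prodMk hφ)
    calc ‖∫ s in (0:ℝ)..r, S (r - s) (φ s)‖
        ≤ ∫ s in (0:ℝ)..r, ‖S (r - s) (φ s)‖ :=
          intervalIntegral.norm_integral_le_integral_norm hr
      _ ≤ ∫ s in (0:ℝ)..r, c₀ * A * Real.exp (lam * s) := by
          apply intervalIntegral.integral_mono_on hr
            (hcont1.norm.intervalIntegrable _ _)
            (Continuous.intervalIntegrable (by fun_prop) _ _)
          intro s hs
          calc ‖S (r - s) (φ s)‖ ≤ c₀ * ‖φ s‖ :=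
                ((S _).le_opNorm _).trans
                  (mul_le_mul_of_nonneg_right (hSbdd _) (norm_nonneg _))
            _ ≤ c₀ * (A * Real.exp (lam * s)) :=
                mul_le_mul_of_nonneg_left (hA s hs) hc₀.le
            _ = c₀ * A * Real.exp (lam * s) := (mul_assoc _ _ _).symm
      _ = c₀ * A * ∫ s in (0:ℝ)..r, Real.exp (lam * s) := by
          rw [intervalIntegral.integral_const_mul]
      _ ≤ c₀ * A * (lam⁻¹ * Real.exp (lam * r)) :=
          mul_le_mul_of_nonneg_left (hexpint r hr) (by positivity)
  -- difference formula for the Picard map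
  have hPsub : ∀ (v₁ v₂ : ℝ → H), Continuous v₁ → Continuous v₂ → ∀ t : ℝ,
      P v₁ t - P v₂ t
        = ∫ s in (0:ℝ)..(max t 0), S (max t 0 - s) (F (v₁ s) - F (v₂ s)) := by
    intro v₁ v₂ h₁ h₂ t
    have h3 : (∫ s in (0:ℝ)..(max t 0), S (max t 0 - s) (F (v₁ s) - F (v₂ s)))
        = (∫ s in (0:ℝ)..(max t 0), S (max t 0 - s) (F (v₁ s)))
          - ∫ s in (0:ℝ)..(max t 0), S (max t 0 - s) (F (v₂ s)) := by
      rw [← intervalIntegral.integral_sub (hIntg v₁ h₁ _ _ _) (hIntg v₂ h₂ _ _ _)]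
      exact intervalIntegral.integral_congr fun s _ => map_sub _ _ _
    simp only [hPdef]
    rw [h3]; abel
  -- weighted space setup
  set wexp : ℝ → ℝ := fun t => Real.exp (lam * max t 0) with hwdef
  have hwcont : Continuous wexp := Real.continuous_exp.comp (continuous_const.mul hmaxcont)
  have hwpos : ∀ t, 0 < wexp t := fun t => Real.exp_pos _
  have hwe : ∀ s : ℝ, 0 ≤ s → wexp s = Real.exp (lam * s) := fun s hs => by
    simp only [hwdef, max_eq_left hs]
  -- the weighted Picard operator on bounded continuous functions
  have hΨex : ∀ g : BoundedContinuousFunction ℝ H,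
      ∃ h : BoundedContinuousFunction ℝ H,
        ∀ t, h t = Real.exp (-(lam * max t 0)) • P (fun s => wexp s • g s) t := by
    intro g
    have hvc : Continuous fun s => wexp s • g s := hwcont.smul g.continuous
    have hPc : Continuous fun t => Real.exp (-(lam * max t 0)) • P (fun s => wexp s • g s) t :=
      ((Real.continuous_exp.comp (continuous_const.mul hmaxcont).neg)).smul (hPcont _ hvc)
    refine ⟨BoundedContinuousFunction.ofNormedAddCommGroup _ hPc
      (c₀ * ‖U₀‖ + c₀ * (‖F 0‖ + K₀ * ‖g‖) * lam⁻¹) ?_, fun t => rfl⟩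
    intro t
    show ‖Real.exp (-(lam * max t 0)) • P (fun s => wexp s • g s) t‖
      ≤ c₀ * ‖U₀‖ + c₀ * (‖F 0‖ + K₀ * ‖g‖) * lam⁻¹
    set A : ℝ := ‖F 0‖ + K₀ * ‖g‖ with hAdef
    have hA0 : 0 ≤ A := by positivity
    set r : ℝ := max t 0 with hrdef
    have hr : 0 ≤ r := le_max_right _ _
    have hb1 : ∀ s ∈ Icc (0:ℝ) r, ‖F (wexp s • g s)‖ ≤ A * Real.exp (lam * s) := by
      intro s hs
      have h2 := hF.dist_le_mul (wexp s • g s) 0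
      rw [dist_eq_norm, dist_eq_norm, sub_zero] at h2
      have h3 := norm_sub_norm_le (F (wexp s • g s)) (F 0)
      have h4 : ‖wexp s • g s‖ ≤ Real.exp (lam * s) * ‖g‖ := by
        rw [norm_smul, Real.norm_eq_abs, abs_of_pos (hwpos s), hwe s hs.1]
        exact mul_le_mul_of_nonneg_left (g.norm_coe_le_norm s) (Real.exp_pos _).le
      have h5 : (1:ℝ) ≤ Real.exp (lam * s) := Real.one_le_exp (mul_nonneg hlam.le hs.1)
      have h6 : (K₀:ℝ) * ‖wexp s • g s‖ ≤ K₀ * (Real.exp (lam * s) * ‖g‖) :=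
        mul_le_mul_of_nonneg_left h4 K₀.coe_nonneg
      have h7 : (0:ℝ) ≤ ‖F 0‖ := norm_nonneg _
      rw [hAdef]
      nlinarith [mul_nonneg K₀.coe_nonneg (norm_nonneg g)]
    have hbound := hkey r hr _ (hF.continuous.comp hvc) A hb1
    have hE1 : Real.exp (-(lam * r)) * Real.exp (lam * r) = 1 := by
      rw [← Real.exp_add]; simp
    have hEle : Real.exp (-(lam * r)) ≤ 1 := Real.exp_le_one_iff.2 (by simp; positivity)
    calc ‖Real.exp (-(lam * r)) • P (fun s => wexp s • g s) t‖
        = Real.exp (-(lam * r)) * ‖P (fun s => wexp s • g s) t‖ := by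
          rw [norm_smul, Real.norm_eq_abs, abs_of_pos (Real.exp_pos _)]
      _ ≤ Real.exp (-(lam * r)) * (c₀ * ‖U₀‖ + c₀ * A * (lam⁻¹ * Real.exp (lam * r))) := by
          apply mul_le_mul_of_nonneg_left _ (Real.exp_pos _).le
          simp only [hPdef]
          rw [← hrdef]
          calc ‖S t U₀ + ∫ s in (0:ℝ)..r, S (r - s) (F (wexp s • g s))‖
              ≤ ‖S t U₀‖ + ‖∫ s in (0:ℝ)..r, S (r - s) (F (wexp s • g s))‖ := norm_add_le _ _
            _ ≤ c₀ * ‖U₀‖ + c₀ * A * (lam⁻¹ * Real.exp (lam * r)) := by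
                apply add_le_add _ hbound
                exact ((S t).le_opNorm _).trans
                  (mul_le_mul_of_nonneg_right (hSbdd _) (norm_nonneg _))
      _ = Real.exp (-(lam * r)) * (c₀ * ‖U₀‖) + c₀ * A * lam⁻¹ := by
          rw [mul_add]
          congr 1
          linear_combination (c₀ * A * lam⁻¹) * hE1
      _ ≤ c₀ * ‖U₀‖ + c₀ * A * lam⁻¹ := by
          have h8 := mul_le_of_le_one_left (mul_nonneg hc₀.le (norm_nonneg U₀)) hEle
          linarith
  choose Ψ hΨ using hΨex
  set κ : NNReal := ⟨K / lam, by positivity⟩ with hκdef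
  have hκcoe : (κ : ℝ) = K / lam := rfl
  have hκ1 : κ < 1 := by
    rw [← NNReal.coe_lt_one, hκcoe, div_lt_one hlam, hlamdef]
    linarith
  have hlip : LipschitzWith κ Ψ := by
    apply LipschitzWith.of_dist_le_mul
    intro g₁ g₂
    rw [BoundedContinuousFunction.dist_le (mul_nonneg κ.coe_nonneg dist_nonneg)]
    intro t
    set r : ℝ := max t 0 with hrdef
    have hr : 0 ≤ r := le_max_right _ _
    have hv₁ : Continuous fun s => wexp s • g₁ s := hwcont.smul g₁.continuous
    have hv₂ : Continuous fun s => wexp s • g₂ s := hwcont.smul g₂.continuous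
    have hφc : Continuous fun s => F (wexp s • g₁ s) - F (wexp s • g₂ s) :=
      (hF.continuous.comp hv₁).sub (hF.continuous.comp hv₂)
    have hb : ∀ s ∈ Icc (0:ℝ) r,
        ‖F (wexp s • g₁ s) - F (wexp s • g₂ s)‖
          ≤ (K₀ * dist g₁ g₂) * Real.exp (lam * s) := by
      intro s hs
      have h1 := hF.dist_le_mul (wexp s • g₁ s) (wexp s • g₂ s)
      rw [dist_eq_norm, dist_eq_norm, ← smul_sub] at h1
      have h2 : ‖wexp s • (g₁ s - g₂ s)‖ = Real.exp (lam * s) * ‖g₁ s - g₂ s‖ := by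
        rw [norm_smul, Real.norm_eq_abs, abs_of_pos (hwpos s), hwe s hs.1]
      have h3 : ‖g₁ s - g₂ s‖ ≤ dist g₁ g₂ := by
        rw [← dist_eq_norm]; exact BoundedContinuousFunction.dist_coe_le_dist s
      have h4 := mul_le_mul_of_nonneg_right
        (mul_le_mul_of_nonneg_left h3 K₀.coe_nonneg) (Real.exp_pos (lam * s)).le
      calc ‖F (wexp s • g₁ s) - F (wexp s • g₂ s)‖ ≤ K₀ * ‖wexp s • (g₁ s - g₂ s)‖ := h1
        _ = K₀ * (Real.exp (lam * s) * ‖g₁ s - g₂ s‖) := by rw [h2]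
        _ ≤ K₀ * dist g₁ g₂ * Real.exp (lam * s) := by nlinarith [h4]
    have hkey2 := hkey r hr _ hφc (K₀ * dist g₁ g₂) hb
    have hE1 : Real.exp (-(lam * r)) * Real.exp (lam * r) = 1 := by
      rw [← Real.exp_add]; simp
    rw [dist_eq_norm, hΨ g₁ t, hΨ g₂ t, ← hrdef, ← smul_sub, norm_smul, Real.norm_eq_abs,
      abs_of_pos (Real.exp_pos _), hPsub _ _ hv₁ hv₂ t, ← hrdef]
    calc Real.exp (-(lam * r)) *
          ‖∫ s in (0:ℝ)..r, S (r - s) (F (wexp s • g₁ s) - F (wexp s • g₂ s))‖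
        ≤ Real.exp (-(lam * r)) * (c₀ * (K₀ * dist g₁ g₂) * (lam⁻¹ * Real.exp (lam * r))) :=
          mul_le_mul_of_nonneg_left hkey2 (Real.exp_pos _).le
      _ = K / lam * dist g₁ g₂ := by
          rw [hKdef]
          linear_combination (c₀ * (K₀:ℝ) * dist g₁ g₂ * lam⁻¹) * hE1
      _ = (κ : ℝ) * dist g₁ g₂ := by rw [hκcoe]
  have hcontr : ContractingWith κ Ψ := ⟨hκ1, hlip⟩
  set g : BoundedContinuousFunction ℝ H := ContractingWith.fixedPoint Ψ hcontr with hgdef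
  have hfix : Ψ g = g := hcontr.fixedPoint_isFixedPt
  set U : ℝ → H := fun t => wexp t • g t with hUdef
  have hUcont : Continuous U := hwcont.smul g.continuous
  have hUP : ∀ t, U t = P U t := by
    intro t
    have h1 : Real.exp (-(lam * max t 0)) • P (fun s => wexp s • g s) t = g t := by
      conv_rhs => rw [← hfix]
      rw [hΨ g t]
    have h2 : (fun s => wexp s • g s) = U := rfl
    rw [h2] at h1
    have h3 : wexp t • (Real.exp (-(lam * max t 0)) • P U t) = wexp t • g t := by rw [h1]
    rw [smul_smul] at h3
    have h4 : wexp t * Real.exp (-(lam * max t 0)) = 1 := by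
      simp only [hwdef]
      rw [← Real.exp_add]
      simp
    rw [h4, one_smul] at h3
    exact h3.symm
  have hUeq : ∀ t, 0 ≤ t → U t = T t U₀ + ∫ s in (0:ℝ)..t, T (t - s) (F (U s)) := by
    intro t ht
    rw [hUP t]
    simp only [hPdef]
    rw [max_eq_left ht, hS_eq t ht]
    congr 1
    apply intervalIntegral.integral_congr
    intro s hs
    rw [uIcc_of_le ht] at hs
    show S (t - s) (F (U s)) = T (t - s) (F (U s))
    rw [hS_eq _ (sub_nonneg.2 hs.2)]
  refine ⟨U, ⟨hUcont.continuousOn, hUeq⟩, ?_⟩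
  rintro V ⟨hVc, hVeq⟩ t₁ ht₁
  set W : ℝ → H := fun s => V (max s 0) with hWdef
  have hWcont : Continuous W :=
    hVc.comp_continuous hmaxcont fun s => mem_Ici.2 (le_max_right _ _)
  have hWV : ∀ s : ℝ, 0 ≤ s → W s = V s := fun s hs => by
    simp only [hWdef, max_eq_left hs]
  set D : ℝ → ℝ := fun s => ‖W s - U s‖ with hDdef
  have hDcont : Continuous D := (hWcont.sub hUcont).norm
  have hD0 : ∀ s, 0 ≤ D s := fun s => norm_nonneg _
  have hDle : ∀ t, 0 ≤ t → D t ≤ K * ∫ s in (0:ℝ)..t, D s := by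
    intro t ht
    have hsub : W t - U t = ∫ s in (0:ℝ)..t, S (t - s) (F (W s) - F (U s)) := by
      have e1 : (∫ s in (0:ℝ)..t, T (t - s) (F (V s)))
          = ∫ s in (0:ℝ)..t, S (t - s) (F (W s)) := by
        apply intervalIntegral.integral_congr
        intro s hs
        rw [uIcc_of_le ht] at hs
        show T (t - s) (F (V s)) = S (t - s) (F (W s))
        rw [hWV s hs.1, hS_eq _ (sub_nonneg.2 hs.2)]
      have e2 : (∫ s in (0:ℝ)..t, T (t - s) (F (U s)))
          = ∫ s in (0:ℝ)..t, S (t - s) (F (U s)) := by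
        apply intervalIntegral.integral_congr
        intro s hs
        rw [uIcc_of_le ht] at hs
        show T (t - s) (F (U s)) = S (t - s) (F (U s))
        rw [hS_eq _ (sub_nonneg.2 hs.2)]
      have h4 : (∫ s in (0:ℝ)..t, S (t - s) (F (W s) - F (U s)))
          = (∫ s in (0:ℝ)..t, S (t - s) (F (W s)))
            - ∫ s in (0:ℝ)..t, S (t - s) (F (U s)) := by
        rw [← intervalIntegral.integral_sub (hIntg W hWcont t 0 t) (hIntg U hUcont t 0 t)]
        exact intervalIntegral.integral_congr fun s _ => map_sub _ _ _
      rw [h4, ← e1, ← e2, hWV t ht, hVeq t ht, hUeq t ht]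
      abel
    show ‖W t - U t‖ ≤ K * ∫ s in (0:ℝ)..t, D s
    rw [hsub]
    calc ‖∫ s in (0:ℝ)..t, S (t - s) (F (W s) - F (U s))‖
        ≤ ∫ s in (0:ℝ)..t, ‖S (t - s) (F (W s) - F (U s))‖ :=
          intervalIntegral.norm_integral_le_integral_norm ht
      _ ≤ ∫ s in (0:ℝ)..t, K * D s := by
          apply intervalIntegral.integral_mono_on ht
            ((hSj.comp ((continuous_const.sub continuous_id).prodMk
              ((hF.continuous.comp hWcont).sub
                (hF.continuous.comp hUcont)))).norm.intervalIntegrable _ _)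
            ((continuous_const.mul hDcont).intervalIntegrable _ _)
          intro s _
          have h1 : ‖S (t - s) (F (W s) - F (U s))‖ ≤ c₀ * ‖F (W s) - F (U s)‖ :=
            ((S _).le_opNorm _).trans (mul_le_mul_of_nonneg_right (hSbdd _) (norm_nonneg _))
          have h2 := hF.dist_le_mul (W s) (U s)
          rw [dist_eq_norm, dist_eq_norm] at h2
          calc ‖S (t - s) (F (W s) - F (U s))‖ ≤ c₀ * ‖F (W s) - F (U s)‖ := h1
            _ ≤ c₀ * (K₀ * ‖W s - U s‖) := mul_le_mul_of_nonneg_left h2 hc₀.le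
            _ = K * D s := by rw [hKdef]; simp only [hDdef]; ring
      _ = K * ∫ s in (0:ℝ)..t, D s := by rw [intervalIntegral.integral_const_mul]
  set φ : ℝ → ℝ := fun t => ∫ s in (0:ℝ)..t, D s with hφdef
  have hφderiv : ∀ t : ℝ, HasDerivAt φ (D t) t := fun t =>
    intervalIntegral.integral_hasDerivAt_right (hDcont.intervalIntegrable _ _)
      (hDcont.stronglyMeasurableAtFilter _ _) hDcont.continuousAt
  have hφcont : Continuous φ := continuous_iff_continuousAt.2 fun t => (hφderiv t).continuousAt
  have hgron := norm_le_gronwallBound_of_norm_deriv_right_le (a := 0) (b := t₁)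
    (f := φ) (f' := D) (δ := 0) (K := K) (ε := 0)
    hφcont.continuousOn (fun t _ => (hφderiv t).hasDerivWithinAt)
    (by simp [hφdef]) ?_
  · have h9 := hgron t₁ ⟨ht₁, le_refl t₁⟩
    rw [gronwallBound_ε0_δ0] at h9
    have hφnn : 0 ≤ φ t₁ := intervalIntegral.integral_nonneg ht₁ fun s _ => hD0 s
    have hφ0 : φ t₁ = 0 := le_antisymm
      (by rwa [Real.norm_eq_abs, abs_of_nonneg hφnn] at h9) hφnn
    have hD1 : D t₁ = 0 := le_antisymm
      (by calc D t₁ ≤ K * φ t₁ := hDle t₁ ht₁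
        _ = 0 := by rw [hφ0, mul_zero]) (hD0 t₁)
    have h10 : W t₁ - U t₁ = 0 := by
      have : ‖W t₁ - U t₁‖ = 0 := hD1
      rwa [norm_eq_zero] at this
    rw [← hWV t₁ ht₁]
    exact sub_eq_zero.1 h10
  · intro t ht
    have hφnn : 0 ≤ φ t := intervalIntegral.integral_nonneg ht.1 fun s _ => hD0 s
    rw [Real.norm_eq_abs, Real.norm_eq_abs, abs_of_nonneg (hD0 t), abs_of_nonneg hφnn,
      add_zero]
    exact hDle t ht.1
end

section
/- For integers m, n ≥ 1 set N = 2m + 2n; let h(s) = 1 − 10s³ + 15s⁴ − 6s⁵; for R > 0 define φ_R : [0,∞) → ℝ by φ_R(r) = 1 for 0 ≤ r ≤ R, φ_R(r) = h((r−R)/R) + (1 − h((r−R)/R))·(R/r)^{N−1} for R < r < 2R, and φ_R(r) = (R/r)^{N−1} for r ≥ 2R. Then the three functions r ↦ r^{N−1} φ_R(r), r ↦ r^N φ_R′(r), and r ↦ r^{N+1} φ_R″(r) are bounded on [0,∞). -/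
/-- The quintic Hermite transition polynomial `h(s) = 1 − 10s³ + 15s⁴ − 6s⁵`. -/
noncomputable def hermiteQuintic (s : ℝ) : ℝ :=
  1 - 10 * s ^ 3 + 15 * s ^ 4 - 6 * s ^ 5

/-- The radial cutoff weight `φ_R`: equal to `1` for `r ≤ R`, a Hermite
interpolation on `(R, 2R)`, and the power decay `(R/r)^{N−1}` for `r ≥ 2R`. -/
noncomputable def radialCutoff (N : ℕ) (R r : ℝ) : ℝ :=
  if r ≤ R then 1
  else if r < 2 * R then
    hermiteQuintic ((r - R) / R)
      + (1 - hermiteQuintic ((r - R) / R)) * (R / r) ^ (N - 1)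
  else (R / r) ^ (N - 1)


noncomputable def rcHq1 (s : ℝ) : ℝ := -(30 * s ^ 2) + 60 * s ^ 3 - 30 * s ^ 4
noncomputable def rcHq2 (s : ℝ) : ℝ := -(60 * s) + 180 * s ^ 2 - 120 * s ^ 3

lemma hasDerivAt_hermite (s : ℝ) : HasDerivAt hermiteQuintic (rcHq1 s) s := by
  have h := (((hasDerivAt_const s (1:ℝ)).sub ((hasDerivAt_pow 3 s).const_mul 10)).add
    ((hasDerivAt_pow 4 s).const_mul 15)).sub ((hasDerivAt_pow 5 s).const_mul 6)
  have hv : rcHq1 s = 0 - 10 * (↑3 * s ^ (3-1)) + 15 * (↑4 * s ^ (4-1)) - 6 * (↑5 * s ^ (5-1)) := by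
    rw [rcHq1]; push_cast; ring
  rw [hv]; exact h

lemma hasDerivAt_rcHq1 (s : ℝ) : HasDerivAt rcHq1 (rcHq2 s) s := by
  have h := ((((hasDerivAt_pow 2 s).const_mul (30:ℝ)).neg.add
    ((hasDerivAt_pow 3 s).const_mul 60)).sub ((hasDerivAt_pow 4 s).const_mul 30))
  have hv : rcHq2 s = -(30 * (↑2 * s ^ (2-1))) + 60 * (↑3 * s ^ (3-1)) - 30 * (↑4 * s ^ (4-1)) := by
    rw [rcHq2]; push_cast; ring
  rw [hv]; exact h

lemma pow_mul_zpow' {r : ℝ} (hr : r ≠ 0) {a : ℕ} {b : ℤ} (h : (a:ℤ) + b = 0) :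
    r ^ a * r ^ b = 1 := by
  rw [← zpow_natCast r a, ← zpow_add₀ hr, h, zpow_zero]

noncomputable def rcG1 (K : ℕ) (R r : ℝ) : ℝ := R ^ K * r ^ (-(K:ℤ))
noncomputable def rcG1d (K : ℕ) (R r : ℝ) : ℝ :=
  R ^ K * ((↑(-(K:ℤ)) : ℝ) * r ^ (-(K:ℤ) - 1))
noncomputable def rcG1dd (K : ℕ) (R r : ℝ) : ℝ :=
  R ^ K * ((↑(-(K:ℤ)) : ℝ) * ((↑(-(K:ℤ) - 1) : ℝ) * r ^ (-(K:ℤ) - 1 - 1)))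

lemma hasDerivAt_rcG1 {K : ℕ} {R r : ℝ} (hr : r ≠ 0) :
    HasDerivAt (rcG1 K R) (rcG1d K R r) r :=
  (hasDerivAt_zpow (-(K:ℤ)) r (Or.inl hr)).const_mul (R ^ K)

lemma hasDerivAt_rcG1d {K : ℕ} {R r : ℝ} (hr : r ≠ 0) :
    HasDerivAt (rcG1d K R) (rcG1dd K R r) r :=
  (((hasDerivAt_zpow (-(K:ℤ) - 1) r (Or.inl hr)).const_mul
    ((↑(-(K:ℤ)) : ℝ))).const_mul (R ^ K))

lemma rcG1_eq {K : ℕ} {R r : ℝ} (hr : r ≠ 0) : rcG1 K R r = (R / r) ^ K := by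
  rw [rcG1, div_pow, zpow_neg, zpow_natCast, div_eq_mul_inv]

lemma rc_pm1 {K : ℕ} {R r : ℝ} (hr : r ≠ 0) : r ^ K * rcG1 K R r = R ^ K := by
  have h1 : r ^ K * r ^ (-(K:ℤ)) = 1 := pow_mul_zpow' hr (by simp)
  calc r ^ K * rcG1 K R r = R ^ K * (r ^ K * r ^ (-(K:ℤ))) := by rw [rcG1]; ring
    _ = R ^ K := by rw [h1, mul_one]

lemma rc_pm2 {K : ℕ} {R r : ℝ} (hr : r ≠ 0) :
    r ^ (K+1) * rcG1d K R r = R ^ K * (↑(-(K:ℤ)) : ℝ) := by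
  have h1 : r ^ (K+1) * r ^ (-(K:ℤ) - 1) = 1 := pow_mul_zpow' hr (by push_cast; ring)
  calc r ^ (K+1) * rcG1d K R r
      = R ^ K * (↑(-(K:ℤ)) : ℝ) * (r ^ (K+1) * r ^ (-(K:ℤ) - 1)) := by rw [rcG1d]; ring
    _ = R ^ K * (↑(-(K:ℤ)) : ℝ) := by rw [h1, mul_one]

lemma rc_pm3 {K : ℕ} {R r : ℝ} (hr : r ≠ 0) :
    r ^ (K+2) * rcG1dd K R r = R ^ K * (↑(-(K:ℤ)) : ℝ) * (↑(-(K:ℤ) - 1) : ℝ) := by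
  have h1 : r ^ (K+2) * r ^ (-(K:ℤ) - 1 - 1) = 1 := pow_mul_zpow' hr (by push_cast; ring)
  calc r ^ (K+2) * rcG1dd K R r
      = R ^ K * (↑(-(K:ℤ)) : ℝ) * (↑(-(K:ℤ) - 1) : ℝ) * (r ^ (K+2) * r ^ (-(K:ℤ) - 1 - 1)) := by
        rw [rcG1dd]; ring
    _ = _ := by rw [h1, mul_one]

noncomputable def rcG2 (K : ℕ) (R r : ℝ) : ℝ :=
  hermiteQuintic ((r - R) / R) * (1 - rcG1 K R r) + rcG1 K R r

noncomputable def rcG2d (K : ℕ) (R r : ℝ) : ℝ :=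
  rcHq1 ((r - R) / R) * (1 / R) * (1 - rcG1 K R r)
    + hermiteQuintic ((r - R) / R) * (-rcG1d K R r) + rcG1d K R r

noncomputable def rcG2dd (K : ℕ) (R r : ℝ) : ℝ :=
  rcHq2 ((r - R) / R) * (1 / R) * (1 / R) * (1 - rcG1 K R r)
    + 2 * (rcHq1 ((r - R) / R) * (1 / R) * (-rcG1d K R r))
    + hermiteQuintic ((r - R) / R) * (-rcG1dd K R r) + rcG1dd K R r

lemma hasDerivAt_sMap (R r : ℝ) : HasDerivAt (fun y : ℝ => (y - R) / R) (1 / R) r :=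
  ((hasDerivAt_id r).sub_const R).div_const R

lemma hasDerivAt_rcG2 {K : ℕ} {R r : ℝ} (hr : r ≠ 0) :
    HasDerivAt (rcG2 K R) (rcG2d K R r) r := by
  have hs := hasDerivAt_sMap R r
  have hH : HasDerivAt (fun y => hermiteQuintic ((y - R) / R))
      (rcHq1 ((r - R) / R) * (1 / R)) r := (hasDerivAt_hermite _).comp r hs
  have hg1 := hasDerivAt_rcG1 (K := K) (R := R) hr
  have hg1d := hasDerivAt_rcG1d (K := K) (R := R) hr
  have h := (hH.mul ((hasDerivAt_const r (1:ℝ)).sub hg1)).add hg1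
  have hv : rcG2d K R r = rcHq1 ((r - R) / R) * (1 / R) * (1 - rcG1 K R r)
      + hermiteQuintic ((r - R) / R) * (0 - rcG1d K R r) + rcG1d K R r := by
    rw [rcG2d]; ring
  rw [hv]; exact h

lemma hasDerivAt_rcG2d {K : ℕ} {R r : ℝ} (hr : r ≠ 0) :
    HasDerivAt (rcG2d K R) (rcG2dd K R r) r := by
  have hs := hasDerivAt_sMap R r
  have hH : HasDerivAt (fun y => hermiteQuintic ((y - R) / R))
      (rcHq1 ((r - R) / R) * (1 / R)) r := (hasDerivAt_hermite _).comp r hs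
  have hH1 : HasDerivAt (fun y => rcHq1 ((y - R) / R))
      (rcHq2 ((r - R) / R) * (1 / R)) r := (hasDerivAt_rcHq1 _).comp r hs
  have hg1 := hasDerivAt_rcG1 (K := K) (R := R) hr
  have hg1d := hasDerivAt_rcG1d (K := K) (R := R) hr
  have h := (((hH1.mul_const (1 / R)).mul ((hasDerivAt_const r (1:ℝ)).sub hg1)).add
    (hH.mul hg1d.neg)).add hg1d
  have hv : rcG2dd K R r =
      rcHq2 ((r - R) / R) * (1 / R) * (1 / R) * (1 - rcG1 K R r)
        + rcHq1 ((r - R) / R) * (1 / R) * (0 - rcG1d K R r)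
      + (rcHq1 ((r - R) / R) * (1 / R) * -rcG1d K R r
        + hermiteQuintic ((r - R) / R) * -rcG1dd K R r)
      + rcG1dd K R r := by
    rw [rcG2dd]; ring
  rw [hv]; exact h

noncomputable def rcD (K : ℕ) (R : ℝ) : ℝ → ℝ := fun r =>
  if r ≤ R then 0 else if r < 2 * R then rcG2d K R r else rcG1d K R r

noncomputable def rcD2 (K : ℕ) (R : ℝ) : ℝ → ℝ := fun r =>
  if r ≤ R then 0 else if r < 2 * R then rcG2dd K R r else rcG1dd K R r

section junction
variable {K : ℕ} {R : ℝ} (hR : 0 < R)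

lemma rc_s_at_R : ((R - R) / R : ℝ) = 0 := by rw [sub_self, zero_div]
lemma rc_s_at_2R (hR : 0 < R) : ((2 * R - R) / R : ℝ) = 1 := by field_simp; ring

lemma hermite_zero : hermiteQuintic 0 = 1 := by norm_num [hermiteQuintic]
lemma hermite_one : hermiteQuintic 1 = 0 := by norm_num [hermiteQuintic]
lemma rcHq1_zero : rcHq1 0 = 0 := by norm_num [rcHq1]
lemma rcHq1_one : rcHq1 1 = 0 := by norm_num [rcHq1]
lemma rcHq2_zero : rcHq2 0 = 0 := by norm_num [rcHq2]
lemma rcHq2_one : rcHq2 1 = 0 := by norm_num [rcHq2]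

lemma rcG1_at_R (hR : 0 < R) : rcG1 K R R = 1 := by
  have : R ^ K * R ^ (-(K:ℤ)) = 1 := pow_mul_zpow' hR.ne' (by simp)
  simpa [rcG1] using this

lemma rcG2_at_R (hR : 0 < R) : rcG2 K R R = 1 := by
  rw [rcG2, rcG1_at_R hR]; ring

lemma rcG2_at_2R (hR : 0 < R) : rcG2 K R (2 * R) = rcG1 K R (2 * R) := by
  rw [rcG2, rc_s_at_2R hR, hermite_one]; ring

lemma rcG2d_at_R (hR : 0 < R) : rcG2d K R R = 0 := by
  rw [rcG2d, rc_s_at_R, rcG1_at_R hR, hermite_zero, rcHq1_zero]; ring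

lemma rcG2d_at_2R (hR : 0 < R) : rcG2d K R (2 * R) = rcG1d K R (2 * R) := by
  rw [rcG2d, rc_s_at_2R hR, hermite_one, rcHq1_one]; ring

lemma rcG2dd_at_R (hR : 0 < R) : rcG2dd K R R = 0 := by
  rw [rcG2dd, rc_s_at_R, hermite_zero, rcHq1_zero, rcHq2_zero]; ring

lemma rcG2dd_at_2R (hR : 0 < R) : rcG2dd K R (2 * R) = rcG1dd K R (2 * R) := by
  rw [rcG2dd, rc_s_at_2R hR, hermite_one, rcHq1_one, rcHq2_one]; ring

lemma rc_phi_mid (hR : 0 < R) {r : ℝ} (h1 : R < r) (h2 : r < 2 * R) :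
    radialCutoff (K + 1) R r = rcG2 K R r := by
  have hr0 : r ≠ 0 := (hR.trans h1).ne'
  rw [radialCutoff, if_neg (not_le.mpr h1), if_pos h2, Nat.add_sub_cancel, rcG2,
    rcG1_eq hr0]
  ring

lemma rc_phi_tail (hR : 0 < R) {r : ℝ} (h1 : 2 * R ≤ r) :
    radialCutoff (K + 1) R r = rcG1 K R r := by
  have hr0 : r ≠ 0 := by nlinarith
  rw [radialCutoff, if_neg (by push_neg; nlinarith), if_neg (not_lt.mpr h1),
    Nat.add_sub_cancel, rcG1_eq hr0]

lemma rc_phi_one {r : ℝ} (h : r ≤ R) : radialCutoff (K + 1) R r = 1 := by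
  rw [radialCutoff, if_pos h]

end junction

open Set Filter Topology in
lemma hasDerivAt_radialCutoff {K : ℕ} {R : ℝ} (hR : 0 < R) (r : ℝ) :
    HasDerivAt (radialCutoff (K + 1) R) (rcD K R r) r := by
  have h2RR : R < 2 * R := by linarith
  rcases lt_trichotomy r R with h | h | h
  · -- r < R : locally constant 1
    have he : radialCutoff (K + 1) R =ᶠ[𝓝 r] fun _ => (1:ℝ) :=
      eventuallyEq_of_mem (Iio_mem_nhds h) (fun x hx => rc_phi_one (le_of_lt hx))
    have := (hasDerivAt_const r (1:ℝ)).congr_of_eventuallyEq he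
    simpa [rcD, if_pos h.le] using this
  · -- r = R
    rw [h]
    have hleft : HasDerivWithinAt (radialCutoff (K + 1) R) 0 (Iic R) R :=
      (hasDerivWithinAt_const R _ (1:ℝ)).congr (fun x hx => rc_phi_one hx)
        (rc_phi_one le_rfl)
    have hg2 : HasDerivAt (rcG2 K R) 0 R := by
      have := hasDerivAt_rcG2 (K := K) (R := R) hR.ne'
      rwa [rcG2d_at_R hR] at this
    have hmem : Iio (2 * R) ∈ 𝓝[Ici R] R := nhdsWithin_le_nhds (Iio_mem_nhds h2RR)
    have he : radialCutoff (K + 1) R =ᶠ[𝓝[Ici R] R] rcG2 K R := by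
      filter_upwards [hmem, self_mem_nhdsWithin] with x hx2 hx1
      rcases eq_or_lt_of_le (Set.mem_Ici.mp hx1 : R ≤ x) with rfl | hlt
      · rw [rc_phi_one le_rfl, rcG2_at_R hR]
      · exact rc_phi_mid hR hlt hx2
    have hright : HasDerivWithinAt (radialCutoff (K + 1) R) 0 (Ici R) R :=
      (hg2.hasDerivWithinAt).congr_of_eventuallyEq he
        (by rw [rc_phi_one le_rfl, rcG2_at_R hR])
    have hu := hleft.union hright
    rw [Iic_union_Ici, hasDerivWithinAt_univ] at hu
    simpa [rcD, if_pos le_rfl] using hu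
  · rcases lt_trichotomy r (2 * R) with h2 | h2 | h2
    · -- middle
      have he : radialCutoff (K + 1) R =ᶠ[𝓝 r] rcG2 K R :=
        eventuallyEq_of_mem (Ioo_mem_nhds h h2)
          (fun x hx => rc_phi_mid hR hx.1 hx.2)
      have := (hasDerivAt_rcG2 (K := K) (R := R) (hR.trans h).ne').congr_of_eventuallyEq he
      simpa [rcD, if_neg (not_le.mpr h), if_pos h2] using this
    · -- r = 2R
      rw [h2]
      have h2R0 : (2 * R : ℝ) ≠ 0 := by positivity
      have hg2 : HasDerivAt (rcG2 K R) (rcG1d K R (2 * R)) (2 * R) := by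
        have := hasDerivAt_rcG2 (K := K) (R := R) h2R0
        rwa [rcG2d_at_2R hR] at this
      have hmem : Ioi R ∈ 𝓝[Iic (2 * R)] (2 * R) := nhdsWithin_le_nhds (Ioi_mem_nhds h2RR)
      have he : radialCutoff (K + 1) R =ᶠ[𝓝[Iic (2 * R)] (2 * R)] rcG2 K R := by
        filter_upwards [hmem, self_mem_nhdsWithin] with x hxR hx2
        rcases lt_or_eq_of_le (show x ≤ 2 * R from hx2) with hlt | heq
        · exact rc_phi_mid hR hxR hlt
        · rw [heq, rc_phi_tail hR le_rfl, rcG2_at_2R hR]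
      have hxeq : radialCutoff (K + 1) R (2 * R) = rcG2 K R (2 * R) := by
        rw [rc_phi_tail hR le_rfl, rcG2_at_2R hR]
      have hleft : HasDerivWithinAt (radialCutoff (K + 1) R) (rcG1d K R (2 * R))
          (Iic (2 * R)) (2 * R) :=
        (hg2.hasDerivWithinAt).congr_of_eventuallyEq he hxeq
      have hright : HasDerivWithinAt (radialCutoff (K + 1) R) (rcG1d K R (2 * R))
          (Ici (2 * R)) (2 * R) :=
        ((hasDerivAt_rcG1 (K := K) (R := R) h2R0).hasDerivWithinAt).congr
          (fun x hx => rc_phi_tail hR hx) (rc_phi_tail hR le_rfl)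
      have hu := hleft.union hright
      rw [Iic_union_Ici, hasDerivWithinAt_univ] at hu
      simpa [rcD, if_neg (not_le.mpr h2RR), if_neg (lt_irrefl (2 * R))] using hu
    · -- tail
      have hr0 : r ≠ 0 := by nlinarith
      have he : radialCutoff (K + 1) R =ᶠ[𝓝 r] rcG1 K R :=
        eventuallyEq_of_mem (Ioi_mem_nhds h2)
          (fun x hx => rc_phi_tail hR (le_of_lt hx))
      have := (hasDerivAt_rcG1 (K := K) (R := R) hr0).congr_of_eventuallyEq he
      simpa [rcD, if_neg (by push_neg; linarith : ¬ r ≤ R), if_neg (not_lt.mpr h2.le)]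
        using this

lemma rcD_one {K : ℕ} {R x : ℝ} (h : x ≤ R) : rcD K R x = 0 := by
  rw [rcD]; exact if_pos h

lemma rcD_mid {K : ℕ} {R x : ℝ} (h1 : R < x) (h2 : x < 2 * R) :
    rcD K R x = rcG2d K R x := by
  rw [rcD]; rw [if_neg (not_le.mpr h1), if_pos h2]

lemma rcD_tail {K : ℕ} {R x : ℝ} (hR : 0 < R) (h1 : 2 * R ≤ x) :
    rcD K R x = rcG1d K R x := by
  rw [rcD, if_neg (by push_neg; nlinarith : ¬ x ≤ R), if_neg (not_lt.mpr h1)]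

open Set Filter Topology in
lemma hasDerivAt_rcD {K : ℕ} {R : ℝ} (hR : 0 < R) (r : ℝ) :
    HasDerivAt (rcD K R) (rcD2 K R r) r := by
  have h2RR : R < 2 * R := by linarith
  rcases lt_trichotomy r R with h | h | h
  · have he : rcD K R =ᶠ[𝓝 r] fun _ => (0:ℝ) :=
      eventuallyEq_of_mem (Iio_mem_nhds h) (fun x hx => rcD_one (le_of_lt hx))
    have := (hasDerivAt_const r (0:ℝ)).congr_of_eventuallyEq he
    simpa [rcD2, if_pos h.le] using this
  · rw [h]
    have hleft : HasDerivWithinAt (rcD K R) 0 (Iic R) R :=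
      (hasDerivWithinAt_const R _ (0:ℝ)).congr (fun x hx => rcD_one hx) (rcD_one le_rfl)
    have hg2 : HasDerivAt (rcG2d K R) 0 R := by
      have := hasDerivAt_rcG2d (K := K) (R := R) hR.ne'
      rwa [rcG2dd_at_R hR] at this
    have hmem : Iio (2 * R) ∈ 𝓝[Ici R] R := nhdsWithin_le_nhds (Iio_mem_nhds h2RR)
    have he : rcD K R =ᶠ[𝓝[Ici R] R] rcG2d K R := by
      filter_upwards [hmem, self_mem_nhdsWithin] with x hx2 hx1
      rcases eq_or_lt_of_le (Set.mem_Ici.mp hx1 : R ≤ x) with rfl | hlt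
      · rw [rcD_one le_rfl, rcG2d_at_R hR]
      · exact rcD_mid hlt hx2
    have hright : HasDerivWithinAt (rcD K R) 0 (Ici R) R :=
      (hg2.hasDerivWithinAt).congr_of_eventuallyEq he
        (by rw [rcD_one le_rfl, rcG2d_at_R hR])
    have hu := hleft.union hright
    rw [Iic_union_Ici, hasDerivWithinAt_univ] at hu
    simpa [rcD2, if_pos le_rfl] using hu
  · rcases lt_trichotomy r (2 * R) with h2 | h2 | h2
    · have he : rcD K R =ᶠ[𝓝 r] rcG2d K R :=
        eventuallyEq_of_mem (Ioo_mem_nhds h h2) (fun x hx => rcD_mid hx.1 hx.2)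
      have := (hasDerivAt_rcG2d (K := K) (R := R) (hR.trans h).ne').congr_of_eventuallyEq he
      simpa [rcD2, if_neg (not_le.mpr h), if_pos h2] using this
    · rw [h2]
      have h2R0 : (2 * R : ℝ) ≠ 0 := by positivity
      have hg2 : HasDerivAt (rcG2d K R) (rcG1dd K R (2 * R)) (2 * R) := by
        have := hasDerivAt_rcG2d (K := K) (R := R) h2R0
        rwa [rcG2dd_at_2R hR] at this
      have hmem : Ioi R ∈ 𝓝[Iic (2 * R)] (2 * R) := nhdsWithin_le_nhds (Ioi_mem_nhds h2RR)
      have he : rcD K R =ᶠ[𝓝[Iic (2 * R)] (2 * R)] rcG2d K R := by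
        filter_upwards [hmem, self_mem_nhdsWithin] with x hxR hx2
        rcases lt_or_eq_of_le (show x ≤ 2 * R from hx2) with hlt | heq
        · exact rcD_mid hxR hlt
        · rw [heq, rcD_tail hR le_rfl, rcG2d_at_2R hR]
      have hxeq : rcD K R (2 * R) = rcG2d K R (2 * R) := by
        rw [rcD_tail hR le_rfl, rcG2d_at_2R hR]
      have hleft : HasDerivWithinAt (rcD K R) (rcG1dd K R (2 * R)) (Iic (2 * R)) (2 * R) :=
        (hg2.hasDerivWithinAt).congr_of_eventuallyEq he hxeq
      have hright : HasDerivWithinAt (rcD K R) (rcG1dd K R (2 * R)) (Ici (2 * R)) (2 * R) :=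
        ((hasDerivAt_rcG1d (K := K) (R := R) h2R0).hasDerivWithinAt).congr
          (fun x hx => rcD_tail hR hx) (rcD_tail hR le_rfl)
      have hu := hleft.union hright
      rw [Iic_union_Ici, hasDerivWithinAt_univ] at hu
      simpa [rcD2, if_neg (not_le.mpr h2RR), if_neg (lt_irrefl (2 * R))] using hu
    · have hr0 : r ≠ 0 := by nlinarith
      have he : rcD K R =ᶠ[𝓝 r] rcG1d K R :=
        eventuallyEq_of_mem (Ioi_mem_nhds h2) (fun x hx => rcD_tail hR (le_of_lt hx))
      have := (hasDerivAt_rcG1d (K := K) (R := R) hr0).congr_of_eventuallyEq he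
      simpa [rcD2, if_neg (by push_neg; linarith : ¬ r ≤ R), if_neg (not_lt.mpr h2.le)]
        using this

lemma deriv_radialCutoff {K : ℕ} {R : ℝ} (hR : 0 < R) :
    deriv (radialCutoff (K + 1) R) = rcD K R :=
  funext fun r => (hasDerivAt_radialCutoff hR r).deriv

lemma deriv2_radialCutoff {K : ℕ} {R : ℝ} (hR : 0 < R) :
    deriv (deriv (radialCutoff (K + 1) R)) = rcD2 K R := by
  rw [deriv_radialCutoff hR]
  exact funext fun r => (hasDerivAt_rcD hR r).deriv

lemma abs_hermite_le {t : ℝ} (h0 : 0 ≤ t) (h1 : t ≤ 1) : |hermiteQuintic t| ≤ 32 := by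
  have p3 : t ^ 3 ≤ 1 := pow_le_one₀ h0 h1
  have p4 : t ^ 4 ≤ 1 := pow_le_one₀ h0 h1
  have p5 : t ^ 5 ≤ 1 := pow_le_one₀ h0 h1
  have q3 : 0 ≤ t ^ 3 := by positivity
  have q4 : 0 ≤ t ^ 4 := by positivity
  have q5 : 0 ≤ t ^ 5 := by positivity
  rw [hermiteQuintic, abs_le]; constructor <;> nlinarith

lemma abs_rcHq1_le {t : ℝ} (h0 : 0 ≤ t) (h1 : t ≤ 1) : |rcHq1 t| ≤ 120 := by
  have p2 : t ^ 2 ≤ 1 := pow_le_one₀ h0 h1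
  have p3 : t ^ 3 ≤ 1 := pow_le_one₀ h0 h1
  have p4 : t ^ 4 ≤ 1 := pow_le_one₀ h0 h1
  have q2 : 0 ≤ t ^ 2 := by positivity
  have q3 : 0 ≤ t ^ 3 := by positivity
  have q4 : 0 ≤ t ^ 4 := by positivity
  rw [rcHq1, abs_le]; constructor <;> nlinarith

lemma abs_rcHq2_le {t : ℝ} (h0 : 0 ≤ t) (h1 : t ≤ 1) : |rcHq2 t| ≤ 360 := by
  have p2 : t ^ 2 ≤ 1 := pow_le_one₀ h0 h1
  have p3 : t ^ 3 ≤ 1 := pow_le_one₀ h0 h1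
  have q2 : 0 ≤ t ^ 2 := by positivity
  have q3 : 0 ≤ t ^ 3 := by positivity
  rw [rcHq2, abs_le]; constructor <;> nlinarith

lemma abs_mul_le2 {a b A B : ℝ} (ha : |a| ≤ A) (hb : |b| ≤ B) : |a * b| ≤ A * B := by
  rw [abs_mul]
  exact mul_le_mul ha hb (abs_nonneg _) ((abs_nonneg a).trans ha)

lemma abs_mul_le3 {a b c A B C : ℝ} (ha : |a| ≤ A) (hb : |b| ≤ B) (hc : |c| ≤ C) :
    |a * b * c| ≤ A * B * C := abs_mul_le2 (abs_mul_le2 ha hb) hc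

lemma abs_mul_le4 {a b c d A B C D : ℝ} (ha : |a| ≤ A) (hb : |b| ≤ B) (hc : |c| ≤ C)
    (hd : |d| ≤ D) : |a * b * c * d| ≤ A * B * C * D :=
  abs_mul_le2 (abs_mul_le3 ha hb hc) hd

lemma abs_mul_le5 {a b c d e A B C D E : ℝ} (ha : |a| ≤ A) (hb : |b| ≤ B) (hc : |c| ≤ C)
    (hd : |d| ≤ D) (he : |e| ≤ E) : |a * b * c * d * e| ≤ A * B * C * D * E :=
  abs_mul_le2 (abs_mul_le4 ha hb hc hd) he

lemma abs_cK (K : ℕ) : |(↑(-(K:ℤ)) : ℝ)| = (K : ℝ) := by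
  push_cast
  rw [abs_neg, abs_of_nonneg (by positivity)]

lemma abs_cK1 (K : ℕ) : |(↑(-(K:ℤ) - 1) : ℝ)| = (K : ℝ) + 1 := by
  push_cast
  rw [show (-(K:ℝ) - 1) = -((K:ℝ) + 1) by ring, abs_neg, abs_of_nonneg (by positivity)]

section bounds
variable {K : ℕ} {R : ℝ}

lemma rc_t0 (hR : 0 < R) {r : ℝ} (h : R < r) : 0 ≤ (r - R) / R :=
  div_nonneg (by linarith) hR.le

lemma rc_t1 (hR : 0 < R) {r : ℝ} (h2 : r < 2 * R) : (r - R) / R ≤ 1 := by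
  rw [div_le_one hR]; linarith

lemma rc_u0 (hR : 0 < R) {r : ℝ} (hr0 : 0 < r) : 0 ≤ rcG1 K R r := by
  rw [rcG1_eq hr0.ne']; positivity

lemma rc_u1 (hR : 0 < R) {r : ℝ} (hr0 : 0 < r) (h : R ≤ r) : rcG1 K R r ≤ 1 := by
  rw [rcG1_eq hr0.ne']
  exact pow_le_one₀ (by positivity) ((div_le_one hr0).mpr h)

lemma rc_bound1 (hR : 0 < R) : ∀ r ∈ Set.Ici (0:ℝ),
    |r ^ K * radialCutoff (K + 1) R r| ≤ 33 * (2 * R) ^ K := by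
  intro r hr
  simp only [Set.mem_Ici] at hr
  have h2R0 : (0:ℝ) ≤ (2 * R) ^ K := by positivity
  rcases le_or_gt r R with h | h
  · rw [rc_phi_one h, mul_one, abs_of_nonneg (pow_nonneg hr _)]
    calc r ^ K ≤ (2 * R) ^ K := pow_le_pow_left₀ hr (by linarith) K
      _ ≤ 33 * (2 * R) ^ K := by linarith
  · rcases lt_or_ge r (2 * R) with h2 | h2
    · have hr0 : (0:ℝ) < r := hR.trans h
      rw [rc_phi_mid hR h h2, rcG2]
      have hH := abs_hermite_le (rc_t0 hR h) (rc_t1 hR h2)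
      have hu0 := rc_u0 (K := K) hR hr0
      have hu1 := rc_u1 (K := K) hR hr0 h.le
      have h1u : |1 - rcG1 K R r| ≤ 1 := abs_le.mpr ⟨by linarith, by linarith⟩
      have hrp : |r ^ K| ≤ (2 * R) ^ K := by
        rw [abs_of_nonneg (pow_nonneg hr _)]
        exact pow_le_pow_left₀ hr h2.le K
      calc |r ^ K * (hermiteQuintic ((r - R) / R) * (1 - rcG1 K R r) + rcG1 K R r)|
          ≤ |r ^ K * (hermiteQuintic ((r - R) / R) * (1 - rcG1 K R r))|
            + |r ^ K * rcG1 K R r| := by rw [mul_add]; exact abs_add_le _ _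
        _ ≤ (2 * R) ^ K * (32 * 1) + (2 * R) ^ K * 1 := by
            refine add_le_add (abs_mul_le2 hrp (abs_mul_le2 hH h1u))
              (abs_mul_le2 hrp (abs_le.mpr ⟨by linarith, hu1⟩))
        _ ≤ 33 * (2 * R) ^ K := by linarith
    · have hr0 : (0:ℝ) < r := lt_of_lt_of_le (by linarith) h2
      rw [rc_phi_tail hR h2, rc_pm1 hr0.ne', abs_of_nonneg (by positivity)]
      calc R ^ K ≤ (2 * R) ^ K := pow_le_pow_left₀ hR.le (by linarith) K
        _ ≤ 33 * (2 * R) ^ K := by linarith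

lemma rc_bound2 (hR : 0 < R) : ∀ r ∈ Set.Ici (0:ℝ),
    |r ^ (K + 1) * rcD K R r| ≤
      120 * (1 / R) * 1 * (2 * R) ^ (K + 1) + (32 * ((K:ℝ) * R ^ K) + (K:ℝ) * R ^ K) := by
  intro r hr
  simp only [Set.mem_Ici] at hr
  have hA0 : (0:ℝ) ≤ 120 * (1 / R) * 1 * (2 * R) ^ (K + 1) := by positivity
  have hB0 : (0:ℝ) ≤ 32 * ((K:ℝ) * R ^ K) := by positivity
  have hKR0 : (0:ℝ) ≤ (K:ℝ) * R ^ K := by positivity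
  rcases le_or_gt r R with h | h
  · rw [rcD_one h, mul_zero, abs_zero]; linarith
  · rcases lt_or_ge r (2 * R) with h2 | h2
    · have hr0 : (0:ℝ) < r := hR.trans h
      rw [rcD_mid h h2]
      have p2 := rc_pm2 (K := K) (R := R) hr0.ne'
      have e : r ^ (K + 1) * rcG2d K R r =
          rcHq1 ((r - R) / R) * (1 / R) * (1 - rcG1 K R r) * r ^ (K + 1)
          + (hermiteQuintic ((r - R) / R) * (-(R ^ K * (↑(-(K:ℤ)) : ℝ)))
             + R ^ K * (↑(-(K:ℤ)) : ℝ)) := by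
        rw [rcG2d]
        linear_combination (1 - hermiteQuintic ((r - R) / R)) * p2
      rw [e]
      have hH := abs_hermite_le (rc_t0 hR h) (rc_t1 hR h2)
      have hH1 := abs_rcHq1_le (rc_t0 hR h) (rc_t1 hR h2)
      have hu0 := rc_u0 (K := K) hR hr0
      have hu1 := rc_u1 (K := K) hR hr0 h.le
      have h1u : |1 - rcG1 K R r| ≤ 1 := abs_le.mpr ⟨by linarith, by linarith⟩
      have hRinv : |1 / R| ≤ 1 / R := le_of_eq (abs_of_pos (by positivity))
      have hrp : |r ^ (K + 1)| ≤ (2 * R) ^ (K + 1) := by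
        rw [abs_of_nonneg (pow_nonneg hr _)]
        exact pow_le_pow_left₀ hr h2.le _
      have habsRc : |R ^ K * (↑(-(K:ℤ)) : ℝ)| = (K:ℝ) * R ^ K := by
        rw [abs_mul, abs_of_nonneg (by positivity : (0:ℝ) ≤ R ^ K), abs_cK]; ring
      calc |rcHq1 ((r - R) / R) * (1 / R) * (1 - rcG1 K R r) * r ^ (K + 1)
            + (hermiteQuintic ((r - R) / R) * (-(R ^ K * (↑(-(K:ℤ)) : ℝ)))
               + R ^ K * (↑(-(K:ℤ)) : ℝ))|
          ≤ |rcHq1 ((r - R) / R) * (1 / R) * (1 - rcG1 K R r) * r ^ (K + 1)|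
            + (|hermiteQuintic ((r - R) / R) * (-(R ^ K * (↑(-(K:ℤ)) : ℝ)))|
               + |R ^ K * (↑(-(K:ℤ)) : ℝ)|) :=
            (abs_add_le _ _).trans (by gcongr; exact abs_add_le _ _)
        _ ≤ 120 * (1 / R) * 1 * (2 * R) ^ (K + 1)
            + (32 * ((K:ℝ) * R ^ K) + (K:ℝ) * R ^ K) := by
            refine add_le_add (abs_mul_le4 hH1 hRinv h1u hrp) (add_le_add ?_ (le_of_eq habsRc))
            have : |(-(R ^ K * (↑(-(K:ℤ)) : ℝ)))| ≤ (K:ℝ) * R ^ K := by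
              rw [abs_neg]; exact le_of_eq habsRc
            exact abs_mul_le2 hH this
    · have hr0 : (0:ℝ) < r := lt_of_lt_of_le (by linarith) h2
      rw [rcD_tail hR h2, rc_pm2 hr0.ne', abs_mul,
        abs_of_nonneg (by positivity : (0:ℝ) ≤ R ^ K), abs_cK]
      nlinarith
end bounds

lemma rc_bound3 {K : ℕ} {R : ℝ} (hR : 0 < R) : ∀ r ∈ Set.Ici (0:ℝ),
    |r ^ (K + 2) * rcD2 K R r| ≤
      360 * (1 / R) * (1 / R) * 1 * (2 * R) ^ (K + 2)
      + 2 * (120 * (1 / R) * (2 * R * ((K:ℝ) * R ^ K)))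
      + (32 * (((K:ℝ) * ((K:ℝ) + 1)) * R ^ K) + ((K:ℝ) * ((K:ℝ) + 1)) * R ^ K) := by
  intro r hr
  simp only [Set.mem_Ici] at hr
  have hA0 : (0:ℝ) ≤ 360 * (1 / R) * (1 / R) * 1 * (2 * R) ^ (K + 2) := by positivity
  have hB0 : (0:ℝ) ≤ 2 * (120 * (1 / R) * (2 * R * ((K:ℝ) * R ^ K))) := by positivity
  have hC0 : (0:ℝ) ≤ 32 * (((K:ℝ) * ((K:ℝ) + 1)) * R ^ K) := by positivity
  have hD0 : (0:ℝ) ≤ ((K:ℝ) * ((K:ℝ) + 1)) * R ^ K := by positivity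
  have habsRcc : |R ^ K * (↑(-(K:ℤ)) : ℝ) * (↑(-(K:ℤ) - 1) : ℝ)|
      = ((K:ℝ) * ((K:ℝ) + 1)) * R ^ K := by
    rw [abs_mul, abs_mul, abs_of_nonneg (by positivity : (0:ℝ) ≤ R ^ K), abs_cK, abs_cK1]
    ring
  rcases le_or_gt r R with h | h
  · rw [rcD2, if_pos h, mul_zero, abs_zero]; linarith
  · rcases lt_or_ge r (2 * R) with h2 | h2
    · have hr0 : (0:ℝ) < r := hR.trans h
      rw [rcD2, if_neg (not_le.mpr h), if_pos h2]
      have p2 := rc_pm2 (K := K) (R := R) hr0.ne'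
      have p3 := rc_pm3 (K := K) (R := R) hr0.ne'
      have p2' : r ^ (K + 2) * rcG1d K R r = r * (R ^ K * (↑(-(K:ℤ)) : ℝ)) := by
        rw [pow_succ]
        linear_combination r * p2
      have e : r ^ (K + 2) * rcG2dd K R r =
          rcHq2 ((r - R) / R) * (1 / R) * (1 / R) * (1 - rcG1 K R r) * r ^ (K + 2)
          + 2 * (rcHq1 ((r - R) / R) * (1 / R) * (-(r * (R ^ K * (↑(-(K:ℤ)) : ℝ)))))
          + (hermiteQuintic ((r - R) / R)
              * (-(R ^ K * (↑(-(K:ℤ)) : ℝ) * (↑(-(K:ℤ) - 1) : ℝ)))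
             + R ^ K * (↑(-(K:ℤ)) : ℝ) * (↑(-(K:ℤ) - 1) : ℝ)) := by
        rw [rcG2dd]
        linear_combination (-(2 * (rcHq1 ((r - R) / R) * (1 / R)))) * p2'
          + (1 - hermiteQuintic ((r - R) / R)) * p3
      rw [e]
      have hH := abs_hermite_le (rc_t0 hR h) (rc_t1 hR h2)
      have hH1 := abs_rcHq1_le (rc_t0 hR h) (rc_t1 hR h2)
      have hH2 := abs_rcHq2_le (rc_t0 hR h) (rc_t1 hR h2)
      have hu0 := rc_u0 (K := K) hR hr0
      have hu1 := rc_u1 (K := K) hR hr0 h.le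
      have h1u : |1 - rcG1 K R r| ≤ 1 := abs_le.mpr ⟨by linarith, by linarith⟩
      have hRinv : |1 / R| ≤ 1 / R := le_of_eq (abs_of_pos (by positivity))
      have hrp : |r ^ (K + 2)| ≤ (2 * R) ^ (K + 2) := by
        rw [abs_of_nonneg (pow_nonneg hr _)]
        exact pow_le_pow_left₀ hr h2.le _
      have habsRc : |R ^ K * (↑(-(K:ℤ)) : ℝ)| = (K:ℝ) * R ^ K := by
        rw [abs_mul, abs_of_nonneg (by positivity : (0:ℝ) ≤ R ^ K), abs_cK]; ring
      have hmid : |(-(r * (R ^ K * (↑(-(K:ℤ)) : ℝ))))| ≤ 2 * R * ((K:ℝ) * R ^ K) := by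
        rw [abs_neg, abs_mul, habsRc, abs_of_nonneg hr]
        have : (0:ℝ) ≤ (K:ℝ) * R ^ K := by positivity
        nlinarith
      have h2le : |(2:ℝ)| ≤ 2 := by norm_num
      have hlast : |(-(R ^ K * (↑(-(K:ℤ)) : ℝ) * (↑(-(K:ℤ) - 1) : ℝ)))|
          ≤ ((K:ℝ) * ((K:ℝ) + 1)) * R ^ K := by
        rw [abs_neg]; exact le_of_eq habsRcc
      calc |rcHq2 ((r - R) / R) * (1 / R) * (1 / R) * (1 - rcG1 K R r) * r ^ (K + 2)
            + 2 * (rcHq1 ((r - R) / R) * (1 / R) * (-(r * (R ^ K * (↑(-(K:ℤ)) : ℝ)))))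
            + (hermiteQuintic ((r - R) / R)
                * (-(R ^ K * (↑(-(K:ℤ)) : ℝ) * (↑(-(K:ℤ) - 1) : ℝ)))
               + R ^ K * (↑(-(K:ℤ)) : ℝ) * (↑(-(K:ℤ) - 1) : ℝ))|
          ≤ |rcHq2 ((r - R) / R) * (1 / R) * (1 / R) * (1 - rcG1 K R r) * r ^ (K + 2)|
            + |2 * (rcHq1 ((r - R) / R) * (1 / R) * (-(r * (R ^ K * (↑(-(K:ℤ)) : ℝ)))))|
            + (|hermiteQuintic ((r - R) / R)
                * (-(R ^ K * (↑(-(K:ℤ)) : ℝ) * (↑(-(K:ℤ) - 1) : ℝ)))|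
               + |R ^ K * (↑(-(K:ℤ)) : ℝ) * (↑(-(K:ℤ) - 1) : ℝ)|) := by
            refine (abs_add_le _ _).trans ?_
            gcongr
            · exact abs_add_le _ _
            · exact abs_add_le _ _
        _ ≤ 360 * (1 / R) * (1 / R) * 1 * (2 * R) ^ (K + 2)
            + 2 * (120 * (1 / R) * (2 * R * ((K:ℝ) * R ^ K)))
            + (32 * (((K:ℝ) * ((K:ℝ) + 1)) * R ^ K) + ((K:ℝ) * ((K:ℝ) + 1)) * R ^ K) := by
            refine add_le_add (add_le_add (abs_mul_le5 hH2 hRinv hRinv h1u hrp)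
              (abs_mul_le2 h2le (abs_mul_le3 hH1 hRinv hmid)))
              (add_le_add (abs_mul_le2 hH hlast) (le_of_eq habsRcc))
    · have hr0 : (0:ℝ) < r := lt_of_lt_of_le (by linarith) h2
      rw [rcD2, if_neg (by push_neg; nlinarith : ¬ r ≤ R), if_neg (not_lt.mpr h2),
        rc_pm3 hr0.ne', habsRcc]
      linarith

/-- For `N = 2m + 2n` (`m, n ≥ 1`) and `R > 0`, the weighted
functions `r^{N−1}φ_R(r)`, `r^N φ_R′(r)` and `r^{N+1} φ_R″(r)` are bounded on
`[0,∞)`. -/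
theorem radialCutoff_weighted_bounds
    (m n : ℕ) (hm : 1 ≤ m) (hn : 1 ≤ n) (N : ℕ) (hN : N = 2 * m + 2 * n)
    (R : ℝ) (hR : 0 < R) :
    (∃ C : ℝ, ∀ r ∈ Set.Ici (0 : ℝ),
      |r ^ (N - 1) * radialCutoff N R r| ≤ C) ∧
    (∃ C : ℝ, ∀ r ∈ Set.Ici (0 : ℝ),
      |r ^ N * deriv (radialCutoff N R) r| ≤ C) ∧
    (∃ C : ℝ, ∀ r ∈ Set.Ici (0 : ℝ),
      |r ^ (N + 1) * deriv (deriv (radialCutoff N R)) r| ≤ C) := by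
  obtain ⟨K, rfl⟩ : ∃ K, N = K + 1 := ⟨N - 1, by omega⟩
  rw [deriv2_radialCutoff hR, deriv_radialCutoff hR]
  simp only [Nat.add_sub_cancel]
  exact ⟨⟨_, rc_bound1 hR⟩, ⟨_, rc_bound2 hR⟩, ⟨_, rc_bound3 hR⟩⟩
end
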